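/- arXiv:2509.01867 — 5 statements merged into one kernel-verified Lean document; each statement's English description precedes it below -/
import Mathlib

section
/- A bi-infinite sequence x̄ of positive integers satisfies m(x̄) ≤ 3 if and only if: (1) there exist a bi-infinite word v̄ ∈ {a, b}^ℤ and k ∈ ℤ such that σᵏ(x̄) equals the blockwise image χ(v̄); and (2) for every i ∈ ℤ, if v̄_i = b and v̄_{i+1} = a then (v̄_{i−1}, v̄_{i−2}, …) ⪯ (v̄_{i+2}, v̄_{i+3}, …), and if v̄_i = a and v̄_{i+1} = b then (v̄_{i+2}, v̄_{i+3}, …) ⪯ (v̄_{i−1}, v̄_{i−2}, …), where ⪯ is the lexicographic order on one-sided infinite {a, b}-sequences induced by a < b. -/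
inductive AB
  | a
  | b

/-- The substitution χ on letters: both symbols of χ(a) = 22 are 2, both of χ(b) = 11 are 1. -/
def chiVal : AB → ℕ
  | AB.a => 2
  | AB.b => 1

/-- χ on finite words over {a, b}, producing a word over {1, 2}. -/
def chiW (w : List AB) : List ℕ :=
  w.flatMap (fun c => [chiVal c, chiVal c])

/-- χ on one-sided infinite words over {a, b}. -/
def chiInf (w : ℕ → AB) : ℕ → ℕ := fun i => chiVal (w (i / 2))

/-- Value of the finite continued fraction `[c₀; c₁, …, cₙ]` (0 for the empty list). -/
noncomputable def cfFin : List ℕ → ℝ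
  | [] => 0
  | c :: l => (c : ℝ) + (cfFin l)⁻¹

/-- Value `[x₀; x₁, x₂, …]` of an infinite continued fraction with entries `x`. -/
noncomputable def cfVal (x : ℕ → ℕ) : ℝ :=
  Filter.limUnder Filter.atTop (fun n : ℕ => cfFin ((List.range (n + 1)).map x))

/-- The height function λ(x) = [x₀; x₁, x₂, …] + [0; x₋₁, x₋₂, …] of a bi-infinite
sequence of positive integers. -/
noncomputable def lamZ (x : ℤ → ℕ) : ℝ :=
  cfVal (fun n : ℕ => x (n : ℤ)) + (cfVal (fun n : ℕ => x (-1 - (n : ℤ))))⁻¹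

/-- The shift on bi-infinite sequences. -/
def shiftZ (x : ℤ → ℕ) (k : ℤ) : ℤ → ℕ := fun i => x (i + k)

/-- The Markov value m(x) = sup_{n ∈ ℤ} λ(σⁿ x). -/
noncomputable def mVal (x : ℤ → ℕ) : EReal :=
  ⨆ k : ℤ, (lamZ (shiftZ x k) : EReal)

/-- The Lagrange value l(x) = limsup_{n → +∞} λ(σⁿ x). -/
noncomputable def lVal (x : ℤ → ℕ) : EReal :=
  Filter.limsup (fun n : ℕ => (lamZ (shiftZ x (n : ℤ)) : EReal)) Filter.atTop

/-- Lexicographic order on one-sided infinite {a, b}-sequences induced by a < b. -/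
def lexLe (s t : ℕ → AB) : Prop :=
  s = t ∨ ∃ k : ℕ, (∀ j < k, s j = t j) ∧ s k = AB.a ∧ t k = AB.b


open Filter Topology

/-! ### Continued fraction foundations -/

/-- Seeded finite continued fraction value. -/
noncomputable def cfFinT : List ℕ → ℝ → ℝ
  | [], t => t
  | c :: l, t => (c : ℝ) + (cfFinT l t)⁻¹

lemma cfFinT_nil (t : ℝ) : cfFinT [] t = t := rfl
lemma cfFinT_cons (c : ℕ) (l : List ℕ) (t : ℝ) :
    cfFinT (c :: l) t = (c : ℝ) + (cfFinT l t)⁻¹ := rfl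

lemma cfFinT_one_le : ∀ (l : List ℕ), (∀ c ∈ l, 1 ≤ c) → ∀ t : ℝ, 1 ≤ t → 1 ≤ cfFinT l t
  | [], _, t, ht => ht
  | c :: l, h, t, ht => by
    have hc : 1 ≤ c := h c (by simp)
    have hl : 1 ≤ cfFinT l t := cfFinT_one_le l (fun c' hc' => h c' (by simp [hc'])) t ht
    have : 0 ≤ (cfFinT l t)⁻¹ := by positivity
    have : (1:ℝ) ≤ (c:ℝ) := by exact_mod_cast hc
    rw [cfFinT_cons]; linarith [inv_nonneg.mpr (le_trans zero_le_one hl)]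

lemma cfFin_append : ∀ (l₁ l₂ : List ℕ), cfFin (l₁ ++ l₂) = cfFinT l₁ (cfFin l₂)
  | [], l₂ => rfl
  | c :: l₁, l₂ => by
    show cfFin (c :: (l₁ ++ l₂)) = _
    rw [cfFin, cfFin_append l₁ l₂, cfFinT_cons]

/-- One-step contraction data: cfFinT with entries ≥ 1 and seed ≥ 1. -/
lemma cfFinT_contract : ∀ (n : ℕ) (l : List ℕ), l.length = n → (∀ c ∈ l, 1 ≤ c) →
    ∀ s t : ℝ, 1 ≤ s → 1 ≤ t →
    |cfFinT l s - cfFinT l t| ≤ 2 * (1/2) ^ n * |s - t| := by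
  intro n
  induction n using Nat.strong_induction_on with
  | _ n ih =>
    intro l hlen hl s t hs ht
    match n, l, hlen with
    | 0, [], _ => simp [cfFinT_nil]; nlinarith [abs_nonneg (s - t)]
    | 1, [c], _ => 
      have hs0 : (0:ℝ) < s := by linarith
      have ht0 : (0:ℝ) < t := by linarith
      rw [cfFinT_cons, cfFinT_nil, cfFinT_cons, cfFinT_nil]
      have : (c:ℝ) + s⁻¹ - ((c:ℝ) + t⁻¹) = (t - s) / (s * t) := by
        field_simp; ring
      rw [this, abs_div, abs_of_pos (by positivity : (0:ℝ) < s * t)]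
      rw [div_le_iff₀ (by positivity)]
      have h1 : |t - s| = |s - t| := abs_sub_comm t s
      have h2 : (1:ℝ) ≤ s * t := by nlinarith
      rw [h1]
      nlinarith [abs_nonneg (s - t)]
    | (m + 2), c :: d :: l, hlen =>
      have hlm : l.length = m := by simpa using hlen
      have hl' : ∀ c' ∈ l, 1 ≤ c' := fun c' hc' => hl c' (by simp [hc'])
      have hA : 1 ≤ cfFinT l s := cfFinT_one_le l hl' s hs
      have hB : 1 ≤ cfFinT l t := cfFinT_one_le l hl' t ht
      have ihl := ih m (by omega) l hlm hl' s t hs ht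
      -- A' = cfFinT l s, etc.
      set A' := cfFinT l s with hA'
      set B' := cfFinT l t with hB'
      have hd : (1:ℝ) ≤ (d:ℝ) := by exact_mod_cast hl d (by simp)
      have hA2 : 1 ≤ cfFinT (d :: l) s := cfFinT_one_le _ (fun c' hc' => hl c' (by simp [hc'])) s hs
      have hB2 : 1 ≤ cfFinT (d :: l) t := cfFinT_one_le _ (fun c' hc' => hl c' (by simp [hc'])) t ht
      have e1 : cfFinT (c :: d :: l) s - cfFinT (c :: d :: l) t
          = (cfFinT (d :: l) t - cfFinT (d :: l) s) / (cfFinT (d :: l) s * cfFinT (d :: l) t) := by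
        rw [cfFinT_cons c (d :: l) s, cfFinT_cons c (d :: l) t]
        field_simp
        ring
      have e3 : cfFinT (d :: l) t - cfFinT (d :: l) s = (A' - B') / (A' * B') := by
        rw [cfFinT_cons, cfFinT_cons, ← hA', ← hB']
        field_simp
        ring
      -- denominators: (d + 1/A') * A' = d*A' + 1 ≥ 2
      have hprod1 : 2 ≤ cfFinT (d :: l) s * A' := by
        rw [cfFinT_cons, ← hA']
        have hA0 : (0:ℝ) < A' := by linarith
        have : ((d:ℝ) + A'⁻¹) * A' = d * A' + 1 := by field_simp
        rw [this]; nlinarith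
      have hprod2 : 2 ≤ cfFinT (d :: l) t * B' := by
        rw [cfFinT_cons, ← hB']
        have hB0 : (0:ℝ) < B' := by linarith
        have : ((d:ℝ) + B'⁻¹) * B' = d * B' + 1 := by field_simp
        rw [this]; nlinarith
      calc |cfFinT (c :: d :: l) s - cfFinT (c :: d :: l) t|
          = |A' - B'| / (cfFinT (d :: l) s * cfFinT (d :: l) t * (A' * B')) := by
            rw [e1, e3]
            have h1 : (0:ℝ) < A' * B' := by nlinarith
            have h2 : (0:ℝ) < cfFinT (d :: l) s * cfFinT (d :: l) t := by nlinarith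
            rw [div_div, abs_div, abs_of_pos (mul_pos h1 h2), mul_comm (A' * B')]
        _ ≤ |A' - B'| / 4 := by
            apply div_le_div_of_nonneg_left (abs_nonneg _) (by norm_num)
            calc (4:ℝ) = 2 * 2 := by norm_num
            _ ≤ (cfFinT (d :: l) s * A') * (cfFinT (d :: l) t * B') := by nlinarith
            _ = cfFinT (d :: l) s * cfFinT (d :: l) t * (A' * B') := by ring
        _ ≤ (2 * (1/2) ^ m * |s - t|) / 4 := by
            apply div_le_div_of_nonneg_right ?_ (by norm_num)
            exact ihl
        _ = 2 * (1/2) ^ (m + 2) * |s - t| := by ring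

/-- Partial quotients sequence. -/
noncomputable def cfPart (y : ℕ → ℕ) (n : ℕ) : ℝ := cfFin ((List.range (n+1)).map y)

lemma cfFin_nil : cfFin [] = 0 := rfl
lemma cfFin_cons (c : ℕ) (l : List ℕ) : cfFin (c :: l) = (c : ℝ) + (cfFin l)⁻¹ := rfl

lemma cfFin_single (c : ℕ) : cfFin [c] = (c : ℝ) := by
  rw [cfFin_cons, cfFin_nil]; simp

lemma cfFin_one_le : ∀ (l : List ℕ), (∀ c ∈ l, 1 ≤ c) → l ≠ [] → 1 ≤ cfFin l
  | [], _, h => absurd rfl h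
  | c :: l, h, _ => by
    have hc : (1:ℝ) ≤ (c:ℝ) := by exact_mod_cast h c (by simp)
    rcases eq_or_ne l [] with rfl | hl
    · rw [cfFin_cons, cfFin_nil]; simp [hc]
    · have h1 : 1 ≤ cfFin l := cfFin_one_le l (fun c' hc' => h c' (by simp [hc'])) hl
      have : 0 ≤ (cfFin l)⁻¹ := inv_nonneg.mpr (by linarith)
      rw [cfFin_cons]; linarith

lemma cfFin_cons_mem (c : ℕ) (l : List ℕ) (h : ∀ c' ∈ l, 1 ≤ c') :
    (c:ℝ) ≤ cfFin (c :: l) ∧ cfFin (c :: l) ≤ (c:ℝ) + 1 := by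
  rcases eq_or_ne l [] with rfl | hl
  · rw [cfFin_cons, cfFin_nil]; norm_num
  · have h1 : 1 ≤ cfFin l := cfFin_one_le l h hl
    have h2 : 0 < (cfFin l)⁻¹ := inv_pos.mpr (by linarith)
    have h3 : (cfFin l)⁻¹ ≤ 1 := by
      rw [inv_le_one_iff₀]; right; exact h1
    rw [cfFin_cons]; constructor <;> linarith

lemma cfPart_dist (y : ℕ → ℕ) (h : ∀ i, 1 ≤ y i) (n : ℕ) :
    dist (cfPart y n) (cfPart y (n+1)) ≤ 2 * (1/2) ^ n := by
  have hmem : ∀ c ∈ (List.range n).map y, 1 ≤ c := by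
    intro c hc
    simp only [List.mem_map] at hc
    obtain ⟨i, _, rfl⟩ := hc
    exact h i
  have hlen : ((List.range n).map y).length = n := by simp
  have e1 : cfPart y n = cfFinT ((List.range n).map y) (y n) := by
    rw [cfPart, List.range_succ, List.map_append, cfFin_append]
    simp [cfFin_single]
  have e2 : cfPart y (n+1) = cfFinT ((List.range n).map y) (cfFin [y n, y (n+1)]) := by
    rw [cfPart, List.range_succ, List.range_succ, List.map_append, List.map_append,
      List.append_assoc, cfFin_append]
    rfl
  have hyn : (1:ℝ) ≤ (y n : ℝ) := by exact_mod_cast h n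
  have hseed : 1 ≤ cfFin [y n, y (n+1)] :=
    cfFin_one_le _ (by intro c hc; simp at hc; rcases hc with rfl | rfl; exacts [h n, h (n+1)]) (by simp)
  have hdiff : |(y n : ℝ) - cfFin [y n, y (n+1)]| ≤ 1 := by
    obtain ⟨hlo, hhi⟩ := cfFin_cons_mem (y n) [y (n+1)] (by intro c hc; simp at hc; subst hc; exact h (n+1))
    rw [abs_sub_comm, abs_le]; constructor <;> linarith
  rw [e1, e2, Real.dist_eq]
  calc |cfFinT ((List.range n).map y) (y n) - cfFinT ((List.range n).map y) (cfFin [y n, y (n+1)])|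
      ≤ 2 * (1/2)^n * |(y n : ℝ) - cfFin [y n, y (n+1)]| :=
        cfFinT_contract n _ hlen hmem _ _ hyn hseed
    _ ≤ 2 * (1/2)^n * 1 := by
        apply mul_le_mul_of_nonneg_left hdiff
        positivity
    _ = 2 * (1/2)^n := by ring

lemma cfPart_cauchy (y : ℕ → ℕ) (h : ∀ i, 1 ≤ y i) : CauchySeq (cfPart y) :=
  cauchySeq_of_le_geometric (1/2) 2 (by norm_num) (cfPart_dist y h)

lemma cfVal_tendsto (y : ℕ → ℕ) (h : ∀ i, 1 ≤ y i) :
    Tendsto (cfPart y) atTop (𝓝 (cfVal y)) :=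
  (cfPart_cauchy y h).tendsto_limUnder

lemma cfPart_mem (y : ℕ → ℕ) (h : ∀ i, 1 ≤ y i) (n : ℕ) :
    (y 0 : ℝ) ≤ cfPart y n ∧ cfPart y n ≤ (y 0 : ℝ) + 1 := by
  have : (List.range (n+1)).map y = y 0 :: (List.range n).map (fun i => y (i+1)) := by
    rw [List.range_succ_eq_map, List.map_cons, List.map_map]
    rfl
  rw [cfPart, this]
  apply cfFin_cons_mem
  intro c hc
  simp only [List.mem_map] at hc
  obtain ⟨i, _, rfl⟩ := hc
  exact h (i+1)

lemma cfVal_mem (y : ℕ → ℕ) (h : ∀ i, 1 ≤ y i) :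
    (y 0 : ℝ) ≤ cfVal y ∧ cfVal y ≤ (y 0 : ℝ) + 1 := by
  constructor
  · exact ge_of_tendsto' (cfVal_tendsto y h) (fun n => (cfPart_mem y h n).1)
  · exact le_of_tendsto' (cfVal_tendsto y h) (fun n => (cfPart_mem y h n).2)

lemma cfVal_one_le (y : ℕ → ℕ) (h : ∀ i, 1 ≤ y i) : 1 ≤ cfVal y := by
  have := (cfVal_mem y h).1
  have h0 : (1:ℝ) ≤ (y 0 : ℝ) := by exact_mod_cast h 0
  linarith

lemma cfVal_pos (y : ℕ → ℕ) (h : ∀ i, 1 ≤ y i) : 0 < cfVal y := by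
  linarith [cfVal_one_le y h]

lemma cfVal_succ (y : ℕ → ℕ) (h : ∀ i, 1 ≤ y i) :
    cfVal y = (y 0 : ℝ) + (cfVal (fun n => y (n+1)))⁻¹ := by
  set y' : ℕ → ℕ := fun n => y (n+1) with hy'
  have h' : ∀ i, 1 ≤ y' i := fun i => h (i+1)
  have hstep : ∀ n, cfPart y (n+1) = (y 0 : ℝ) + (cfPart y' n)⁻¹ := by
    intro n
    rw [cfPart, cfPart, List.range_succ_eq_map, List.map_cons, List.map_map, cfFin_cons]
    rfl
  have h1 : Tendsto (fun n => cfPart y (n+1)) atTop (𝓝 (cfVal y)) :=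
    (cfVal_tendsto y h).comp (tendsto_add_atTop_nat 1)
  have h2 : Tendsto (fun n => (y 0 : ℝ) + (cfPart y' n)⁻¹) atTop
      (𝓝 ((y 0 : ℝ) + (cfVal y')⁻¹)) := by
    apply Tendsto.const_add
    exact ((cfVal_tendsto y' h').inv₀ (by linarith [cfVal_one_le y' h'])).congr (fun n => rfl)
  have : Tendsto (fun n => cfPart y (n+1)) atTop (𝓝 ((y 0 : ℝ) + (cfVal y')⁻¹)) := by
    simpa only [hstep] using h2
  exact tendsto_nhds_unique h1 this

/-- Prepend a digit to an infinite sequence. -/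
def sc (c : ℕ) (y : ℕ → ℕ) : ℕ → ℕ
  | 0 => c
  | n + 1 => y n

lemma sc_succ (c : ℕ) (y : ℕ → ℕ) : (fun n => sc c y (n+1)) = y := rfl

lemma sc_digits (c : ℕ) (y : ℕ → ℕ) (hc : 1 ≤ c) (h : ∀ i, 1 ≤ y i) : ∀ i, 1 ≤ sc c y i := by
  intro i; cases i with
  | zero => exact hc
  | succ n => exact h n

lemma cfVal_sc (c : ℕ) (y : ℕ → ℕ) (hc : 1 ≤ c) (h : ∀ i, 1 ≤ y i) :
    cfVal (sc c y) = (c : ℝ) + (cfVal y)⁻¹ := by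
  rw [cfVal_succ (sc c y) (sc_digits c y hc h)]
  rfl

/-- Crude bound: digits in {1,2} give cfVal ≤ 3 and ≥ 4/3, refined to ≤ 11/4. -/
lemma cfVal_le_three (y : ℕ → ℕ) (h1 : ∀ i, 1 ≤ y i) (h2 : ∀ i, y i ≤ 2) : cfVal y ≤ 3 := by
  have := (cfVal_mem y h1).2
  have : (y 0 : ℝ) ≤ 2 := by exact_mod_cast h2 0
  linarith [(cfVal_mem y h1).2]

lemma cfVal_ge_43 (y : ℕ → ℕ) (h1 : ∀ i, 1 ≤ y i) (h2 : ∀ i, y i ≤ 2) : 4/3 ≤ cfVal y := by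
  set y' : ℕ → ℕ := fun n => y (n+1)
  have h1' : ∀ i, 1 ≤ y' i := fun i => h1 (i+1)
  have h2' : ∀ i, y' i ≤ 2 := fun i => h2 (i+1)
  have hy3 : cfVal y' ≤ 3 := cfVal_le_three y' h1' h2'
  have hy0 : (0:ℝ) < cfVal y' := cfVal_pos y' h1'
  have hinv : (3:ℝ)⁻¹ ≤ (cfVal y')⁻¹ := (inv_le_inv₀ (by norm_num) hy0).mpr hy3
  rw [cfVal_succ y h1]
  have : (1:ℝ) ≤ (y 0 : ℝ) := by exact_mod_cast h1 0
  linarith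

lemma cfVal_le_114 (y : ℕ → ℕ) (h1 : ∀ i, 1 ≤ y i) (h2 : ∀ i, y i ≤ 2) : cfVal y ≤ 11/4 := by
  set y' : ℕ → ℕ := fun n => y (n+1)
  have h1' : ∀ i, 1 ≤ y' i := fun i => h1 (i+1)
  have h2' : ∀ i, y' i ≤ 2 := fun i => h2 (i+1)
  have hy : 4/3 ≤ cfVal y' := cfVal_ge_43 y' h1' h2'
  have hinv : (cfVal y')⁻¹ ≤ 3/4 := by
    rw [inv_le_comm₀ (by linarith) (by norm_num)]
    linarith
  rw [cfVal_succ y h1]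
  have : (y 0 : ℝ) ≤ 2 := by exact_mod_cast h2 0
  linarith

/-! ### Alternating order -/

/-- Strict alternating lexicographic order on digit sequences:
smaller at the first difference if it is at an even index, larger if odd. -/
def altLt (u w : ℕ → ℕ) : Prop :=
  ∃ k : ℕ, (∀ j < k, u j = w j) ∧
    ((Even k ∧ u k < w k) ∨ (¬ Even k ∧ w k < u k))

def altLe (u w : ℕ → ℕ) : Prop := u = w ∨ altLt u w

lemma altLe_refl (u : ℕ → ℕ) : altLe u u := Or.inl rfl

lemma cfVal_lt_of_altLt : ∀ (k : ℕ) (u w : ℕ → ℕ), (∀ i, 1 ≤ u i) → (∀ i, 1 ≤ w i) →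
    (∀ j < k, u j = w j) → ((Even k ∧ u k < w k) ∨ (¬ Even k ∧ w k < u k)) →
    cfVal u < cfVal w := by
  intro k
  induction k with
  | zero =>
    intro u w hu hw _ hk
    rcases hk with ⟨_, hlt⟩ | ⟨hne, _⟩
    · -- u 0 < w 0
      have h1 : cfVal u ≤ (u 0 : ℝ) + 1 := (cfVal_mem u hu).2
      have h2 : (u 0 : ℝ) + 1 ≤ (w 0 : ℝ) := by exact_mod_cast hlt
      have h3 : (w 0 : ℝ) < cfVal w := by
        rw [cfVal_succ w hw]
        have : 0 < (cfVal (fun n => w (n+1)))⁻¹ :=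
          inv_pos.mpr (cfVal_pos _ (fun i => hw (i+1)))
        linarith
      linarith
    · exact absurd (Even.zero) hne
  | succ k ih =>
    intro u w hu hw hagree hk
    set u' : ℕ → ℕ := fun n => u (n+1) with hu'
    set w' : ℕ → ℕ := fun n => w (n+1) with hw'
    have hu'1 : ∀ i, 1 ≤ u' i := fun i => hu (i+1)
    have hw'1 : ∀ i, 1 ≤ w' i := fun i => hw (i+1)
    have h0 : u 0 = w 0 := hagree 0 (Nat.succ_pos k)
    have hagree' : ∀ j < k, w' j = u' j := fun j hj => (hagree (j+1) (by omega)).symm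
    have hk' : ((Even k ∧ w' k < u' k) ∨ (¬ Even k ∧ u' k < w' k)) := by
      rcases hk with ⟨he, hlt⟩ | ⟨he, hlt⟩
      · right
        constructor
        · intro hek
          exact (Nat.even_add_one.mp he) hek
        · exact hlt
      · left
        constructor
        · rcases Nat.even_or_odd k with h | h
          · exact h
          · exact absurd (Nat.even_add_one.mpr (Nat.not_even_iff_odd.mpr h)) he
        · exact hlt
    have hlt' : cfVal w' < cfVal u' := ih w' u' hw'1 hu'1 hagree' hk'
    have hinv : (cfVal u')⁻¹ < (cfVal w')⁻¹ := by
      apply inv_strictAnti₀ (cfVal_pos w' hw'1) hlt'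
    rw [cfVal_succ u hu, cfVal_succ w hw, h0]
    exact (add_lt_add_iff_left _).mpr hinv

lemma cfVal_le_of_altLe (u w : ℕ → ℕ) (hu : ∀ i, 1 ≤ u i) (hw : ∀ i, 1 ≤ w i)
    (h : altLe u w) : cfVal u ≤ cfVal w := by
  rcases h with rfl | ⟨k, h1, h2⟩
  · exact le_refl _
  · exact le_of_lt (cfVal_lt_of_altLt k u w hu hw h1 h2)

lemma altLe_or_altLt (u w : ℕ → ℕ) : altLe u w ∨ altLt w u := by
  by_cases heq : u = w
  · exact Or.inl (Or.inl heq)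
  · have hex : ∃ k, u k ≠ w k := Function.ne_iff.mp heq
    classical
    set k := Nat.find hex with hk
    have hne : u k ≠ w k := Nat.find_spec hex
    have hagree : ∀ j < k, u j = w j := by
      intro j hj
      by_contra hc
      have h5 : Nat.find hex ≤ j := Nat.find_le hc
      omega
    rcases Nat.even_or_odd k with he | ho
    · rcases Nat.lt_or_ge (u k) (w k) with hlt | hge
      · exact Or.inl (Or.inr ⟨k, hagree, Or.inl ⟨he, hlt⟩⟩)
      · have : w k < u k := by omega
        exact Or.inr ⟨k, fun j hj => (hagree j hj).symm, Or.inl ⟨he, this⟩⟩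
    · have he' : ¬ Even k := Nat.not_even_iff_odd.mpr ho
      rcases Nat.lt_or_ge (u k) (w k) with hlt | hge
      · exact Or.inr ⟨k, fun j hj => (hagree j hj).symm, Or.inr ⟨he', hlt⟩⟩
      · have : w k < u k := by omega
        exact Or.inl (Or.inr ⟨k, hagree, Or.inr ⟨he', this⟩⟩)

lemma altLe_of_cfVal_le (u w : ℕ → ℕ) (hu : ∀ i, 1 ≤ u i) (hw : ∀ i, 1 ≤ w i)
    (h : cfVal u ≤ cfVal w) : altLe u w := by
  rcases altLe_or_altLt u w with h1 | ⟨k, h1, h2⟩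
  · exact h1
  · exact absurd (cfVal_lt_of_altLt k w u hw hu h1 h2) (by linarith)

lemma altLe_iff_cfVal_le (u w : ℕ → ℕ) (hu : ∀ i, 1 ≤ u i) (hw : ∀ i, 1 ≤ w i) :
    altLe u w ↔ cfVal u ≤ cfVal w :=
  ⟨cfVal_le_of_altLe u w hu hw, altLe_of_cfVal_le u w hu hw⟩

/-- Prepending a common digit flips the alternating order. -/
lemma altLe_cons (c : ℕ) (u w : ℕ → ℕ) : altLe (sc c u) (sc c w) ↔ altLe w u := by
  constructor
  · rintro (heq | ⟨k, h1, h2⟩)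
    · left
      funext n
      have := congrFun heq (n+1)
      simpa [sc] using this.symm
    · match k, h2 with
      | 0, h2 => rcases h2 with ⟨_, h⟩ | ⟨_, h⟩ <;> exact absurd h (lt_irrefl _)
      | k+1, h2 =>
        right
        refine ⟨k, fun j hj => (h1 (j+1) (by omega)).symm, ?_⟩
        rcases h2 with ⟨he, hlt⟩ | ⟨he, hlt⟩
        · exact Or.inr ⟨fun hek => (Nat.even_add_one.mp he) hek, hlt⟩
        · refine Or.inl ⟨?_, hlt⟩
          rcases Nat.even_or_odd k with h | h
          · exact h
          · exact absurd (Nat.even_add_one.mpr (Nat.not_even_iff_odd.mpr h)) he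
  · rintro (heq | ⟨k, h1, h2⟩)
    · left; funext n; cases n with
      | zero => rfl
      | succ m => simp [sc, congrFun heq m]
    · right
      refine ⟨k+1, ?_, ?_⟩
      · intro j hj
        cases j with
        | zero => rfl
        | succ m => exact (h1 m (by omega)).symm
      · rcases h2 with ⟨he, hlt⟩ | ⟨he, hlt⟩
        · exact Or.inr ⟨fun hek => (Nat.even_add_one.mp hek) he, hlt⟩
        · refine Or.inl ⟨Nat.even_add_one.mpr he, hlt⟩

/-! ### Position sequences and the height function -/

/-- The forward digit sequence at position n (inclusive). -/
def Rse (x : ℤ → ℕ) (n : ℤ) : ℕ → ℕ := fun j => x (n + j)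

/-- The backward digit sequence at position n (exclusive), reversed. -/
def Lse (x : ℤ → ℕ) (n : ℤ) : ℕ → ℕ := fun j => x (n - 1 - j)

lemma Rse_zero (x : ℤ → ℕ) (n : ℤ) : Rse x n 0 = x n := by simp [Rse]
lemma Rse_one (x : ℤ → ℕ) (n : ℤ) : Rse x n 1 = x (n+1) := by simp [Rse]
lemma Lse_zero (x : ℤ → ℕ) (n : ℤ) : Lse x n 0 = x (n-1) := by simp [Lse]
lemma Lse_one (x : ℤ → ℕ) (n : ℤ) : Lse x n 1 = x (n-2) := by
  simp [Lse]; ring_nf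

lemma Rse_shift (x : ℤ → ℕ) (n : ℤ) : (fun j => Rse x n (j+1)) = Rse x (n+1) := by
  funext j; simp [Rse]; ring_nf

lemma Rse_shift2 (x : ℤ → ℕ) (n : ℤ) : (fun j => Rse x n (j+2)) = Rse x (n+2) := by
  funext j; simp [Rse]; ring_nf

lemma Rse_shift3 (x : ℤ → ℕ) (n : ℤ) : (fun j => Rse x n (j+3)) = Rse x (n+3) := by
  funext j; simp [Rse]; ring_nf

lemma Lse_shift (x : ℤ → ℕ) (n : ℤ) : (fun j => Lse x n (j+1)) = Lse x (n-1) := by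
  funext j; simp [Lse]; ring_nf

lemma Lse_shift2 (x : ℤ → ℕ) (n : ℤ) : (fun j => Lse x n (j+2)) = Lse x (n-2) := by
  funext j; simp [Lse]; ring_nf

lemma Lse_sc (x : ℤ → ℕ) (n : ℤ) : Lse x (n+1) = sc (x n) (Lse x n) := by
  funext j
  cases j with
  | zero => simp [Lse, sc]
  | succ m => simp [Lse, sc]; ring_nf

lemma Rse_digits (x : ℤ → ℕ) (h : ∀ i, 1 ≤ x i) (n : ℤ) : ∀ j, 1 ≤ Rse x n j := fun j => h _
lemma Lse_digits (x : ℤ → ℕ) (h : ∀ i, 1 ≤ x i) (n : ℤ) : ∀ j, 1 ≤ Lse x n j := fun j => h _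

lemma lam_formula (x : ℤ → ℕ) (n : ℤ) :
    lamZ (shiftZ x n) = cfVal (Rse x n) + (cfVal (Lse x n))⁻¹ := by
  have e1 : (fun j : ℕ => shiftZ x n j) = Rse x n := by
    funext j; simp [shiftZ, Rse, add_comm]
  have e2 : (fun j : ℕ => shiftZ x n (-1 - j)) = Lse x n := by
    funext j; simp [shiftZ, Lse]; ring_nf
  rw [lamZ, e1, e2]

lemma cfVal_Rse_succ (x : ℤ → ℕ) (h : ∀ i, 1 ≤ x i) (n : ℤ) :
    cfVal (Rse x n) = (x n : ℝ) + (cfVal (Rse x (n+1)))⁻¹ := by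
  rw [cfVal_succ (Rse x n) (Rse_digits x h n), Rse_shift, Rse_zero]

lemma lam_reflect (x : ℤ → ℕ) (h : ∀ i, 1 ≤ x i) (n : ℤ) :
    lamZ (shiftZ x n) = cfVal (Lse x (n+1)) + (cfVal (Rse x (n+1)))⁻¹ := by
  rw [lam_formula, cfVal_Rse_succ x h n, Lse_sc,
    cfVal_sc (x n) (Lse x n) (h n) (Lse_digits x h n)]
  ring

/-! ### The three key local criteria -/

lemma ident22 (y : ℕ → ℕ) (h : ∀ i, 1 ≤ y i) (h0 : y 0 = 2) (h1 : y 1 = 2) :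
    3 - cfVal y = (cfVal (sc 1 (sc 1 (fun n => y (n+2)))))⁻¹ := by
  set s := cfVal (fun n => y (n+2)) with hs
  have hs1 : 1 ≤ s := cfVal_one_le _ (fun i => h (i+2))
  have e1 : cfVal y = 2 + ((2:ℝ) + s⁻¹)⁻¹ := by
    rw [cfVal_succ y h, h0, cfVal_succ (fun n => y (n+1)) (fun i => h (i+1))]
    norm_num [h1]
    rfl
  have e2 : cfVal (sc 1 (sc 1 (fun n => y (n+2)))) = 1 + ((1:ℝ) + s⁻¹)⁻¹ := by
    rw [cfVal_sc 1 _ le_rfl (sc_digits 1 _ le_rfl (fun i => h (i+2))),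
      cfVal_sc 1 _ le_rfl (fun i => h (i+2))]
    norm_num
    rfl
  rw [e1, e2]
  have h2 : (0:ℝ) < s := by linarith
  field_simp
  ring

lemma ident211 (y : ℕ → ℕ) (h : ∀ i, 1 ≤ y i) (h0 : y 0 = 2) (h1 : y 1 = 1) (h2 : y 2 = 1) :
    3 - cfVal y = (cfVal (sc 2 (fun n => y (n+3))))⁻¹ := by
  set s := cfVal (fun n => y (n+3)) with hs
  have hs1 : 1 ≤ s := cfVal_one_le _ (fun i => h (i+3))
  have e1 : cfVal y = 2 + ((1:ℝ) + ((1:ℝ) + s⁻¹)⁻¹)⁻¹ := by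
    rw [cfVal_succ y h, h0, cfVal_succ (fun n => y (n+1)) (fun i => h (i+1)),
      cfVal_succ (fun n => y (n+1+1)) (fun i => h (i+2))]
    norm_num [h1, h2]
    rfl
  have e2 : cfVal (sc 2 (fun n => y (n+3))) = 2 + s⁻¹ := by
    rw [cfVal_sc 2 _ (by norm_num) (fun i => h (i+3))]
    norm_num [← hs]
  rw [e1, e2]
  have hp : (0:ℝ) < s := by linarith
  have hp2 : (0:ℝ) < 1 + s⁻¹ := by positivity
  field_simp
  ring

section Keys
variable (x : ℤ → ℕ)

lemma keyF4 (hd : ∀ i, 1 ≤ x i) (n : ℤ) (h0 : x n = 2) (h1 : x (n+1) = 2) :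
    lamZ (shiftZ x n) ≤ 3 ↔ altLe (sc 1 (sc 1 (Rse x (n+2)))) (Lse x n) := by
  have hR : ∀ j, 1 ≤ Rse x n j := Rse_digits x hd n
  have hL : ∀ j, 1 ≤ Lse x n j := Lse_digits x hd n
  have hy0 : Rse x n 0 = 2 := by rw [Rse_zero, h0]
  have hy1 : Rse x n 1 = 2 := by rw [Rse_one, h1]
  have hid := ident22 (Rse x n) hR hy0 hy1
  rw [show (fun m => Rse x n (m+2)) = Rse x (n+2) from Rse_shift2 x n] at hid
  set Q := sc 1 (sc 1 (Rse x (n+2))) with hQ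
  have hQd : ∀ j, 1 ≤ Q j :=
    sc_digits 1 _ le_rfl (sc_digits 1 _ le_rfl (Rse_digits x hd (n+2)))
  have hQpos : 0 < cfVal Q := cfVal_pos Q hQd
  have hLpos : 0 < cfVal (Lse x n) := cfVal_pos _ hL
  rw [lam_formula]
  constructor
  · intro hle
    rw [altLe_iff_cfVal_le Q _ hQd hL]
    have h4 : (cfVal (Lse x n))⁻¹ ≤ (cfVal Q)⁻¹ := by linarith
    exact (inv_le_inv₀ hLpos hQpos).mp h4
  · intro halt
    have h4 : cfVal Q ≤ cfVal (Lse x n) := (altLe_iff_cfVal_le Q _ hQd hL).mp halt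
    have h5 : (cfVal (Lse x n))⁻¹ ≤ (cfVal Q)⁻¹ := (inv_le_inv₀ hLpos hQpos).mpr h4
    linarith

lemma keyF4sym (hd : ∀ i, 1 ≤ x i) (n : ℤ) (h0 : x n = 2) (h1 : x (n-1) = 2) :
    lamZ (shiftZ x n) ≤ 3 ↔ altLe (sc 1 (sc 1 (Lse x (n-1)))) (Rse x (n+1)) := by
  have hL : ∀ j, 1 ≤ Lse x (n+1) j := Lse_digits x hd (n+1)
  have hR : ∀ j, 1 ≤ Rse x (n+1) j := Rse_digits x hd (n+1)
  have hy0 : Lse x (n+1) 0 = 2 := by rw [Lse_zero]; simpa using h0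
  have hy1 : Lse x (n+1) 1 = 2 := by
    rw [Lse_one, show n + 1 - 2 = n - 1 by ring, h1]
  have hid := ident22 (Lse x (n+1)) hL hy0 hy1
  have hsh : (fun m => Lse x (n+1) (m+2)) = Lse x (n-1) := by
    rw [Lse_shift2]; ring_nf
  rw [hsh] at hid
  set Q := sc 1 (sc 1 (Lse x (n-1))) with hQ
  have hQd : ∀ j, 1 ≤ Q j :=
    sc_digits 1 _ le_rfl (sc_digits 1 _ le_rfl (Lse_digits x hd (n-1)))
  have hQpos : 0 < cfVal Q := cfVal_pos Q hQd
  have hRpos : 0 < cfVal (Rse x (n+1)) := cfVal_pos _ hR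
  rw [lam_reflect x hd]
  constructor
  · intro hle
    rw [altLe_iff_cfVal_le Q _ hQd hR]
    have h4 : (cfVal (Rse x (n+1)))⁻¹ ≤ (cfVal Q)⁻¹ := by linarith
    exact (inv_le_inv₀ hRpos hQpos).mp h4
  · intro halt
    have h4 : cfVal Q ≤ cfVal (Rse x (n+1)) := (altLe_iff_cfVal_le Q _ hQd hR).mp halt
    have h5 : (cfVal (Rse x (n+1)))⁻¹ ≤ (cfVal Q)⁻¹ := (inv_le_inv₀ hRpos hQpos).mpr h4
    linarith

lemma keyF5 (hd : ∀ i, 1 ≤ x i) (n : ℤ) (h0 : x n = 2) (h1 : x (n+1) = 1) (h2 : x (n+2) = 1) :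
    lamZ (shiftZ x n) ≤ 3 ↔ altLe (sc 2 (Rse x (n+3))) (Lse x n) := by
  have hR : ∀ j, 1 ≤ Rse x n j := Rse_digits x hd n
  have hL : ∀ j, 1 ≤ Lse x n j := Lse_digits x hd n
  have hy0 : Rse x n 0 = 2 := by rw [Rse_zero, h0]
  have hy1 : Rse x n 1 = 1 := by rw [Rse_one, h1]
  have hy2 : Rse x n 2 = 1 := by
    show x (n + (2:ℕ)) = 1
    simpa using h2
  have hid := ident211 (Rse x n) hR hy0 hy1 hy2
  rw [show (fun m => Rse x n (m+3)) = Rse x (n+3) from Rse_shift3 x n] at hid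
  set Q := sc 2 (Rse x (n+3)) with hQ
  have hQd : ∀ j, 1 ≤ Q j := sc_digits 2 _ (by norm_num) (Rse_digits x hd (n+3))
  have hQpos : 0 < cfVal Q := cfVal_pos Q hQd
  have hLpos : 0 < cfVal (Lse x n) := cfVal_pos _ hL
  rw [lam_formula]
  constructor
  · intro hle
    rw [altLe_iff_cfVal_le Q _ hQd hL]
    have h4 : (cfVal (Lse x n))⁻¹ ≤ (cfVal Q)⁻¹ := by linarith
    exact (inv_le_inv₀ hLpos hQpos).mp h4
  · intro halt
    have h4 : cfVal Q ≤ cfVal (Lse x n) := (altLe_iff_cfVal_le Q _ hQd hL).mp halt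
    have h5 : (cfVal (Lse x n))⁻¹ ≤ (cfVal Q)⁻¹ := (inv_le_inv₀ hLpos hQpos).mpr h4
    linarith

lemma keyF5sym (hd : ∀ i, 1 ≤ x i) (n : ℤ) (h0 : x n = 2) (h1 : x (n-1) = 1) (h2 : x (n-2) = 1) :
    lamZ (shiftZ x n) ≤ 3 ↔ altLe (sc 2 (Lse x (n-2))) (Rse x (n+1)) := by
  have hL : ∀ j, 1 ≤ Lse x (n+1) j := Lse_digits x hd (n+1)
  have hR : ∀ j, 1 ≤ Rse x (n+1) j := Rse_digits x hd (n+1)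
  have hy0 : Lse x (n+1) 0 = 2 := by rw [Lse_zero]; simpa using h0
  have hy1 : Lse x (n+1) 1 = 1 := by
    rw [Lse_one, show n + 1 - 2 = n - 1 by ring, h1]
  have hy2 : Lse x (n+1) 2 = 1 := by
    show x (n + 1 - 1 - (2:ℕ)) = 1
    have : n + 1 - 1 - (2:ℕ) = n - 2 := by push_cast; ring
    rw [this, h2]
  have hid := ident211 (Lse x (n+1)) hL hy0 hy1 hy2
  have hsh : (fun m => Lse x (n+1) (m+3)) = Lse x (n-2) := by
    funext j; simp [Lse]; ring_nf
  rw [hsh] at hid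
  set Q := sc 2 (Lse x (n-2)) with hQ
  have hQd : ∀ j, 1 ≤ Q j := sc_digits 2 _ (by norm_num) (Lse_digits x hd (n-2))
  have hQpos : 0 < cfVal Q := cfVal_pos Q hQd
  have hRpos : 0 < cfVal (Rse x (n+1)) := cfVal_pos _ hR
  rw [lam_reflect x hd]
  constructor
  · intro hle
    rw [altLe_iff_cfVal_le Q _ hQd hR]
    have h4 : (cfVal (Rse x (n+1)))⁻¹ ≤ (cfVal Q)⁻¹ := by linarith
    exact (inv_le_inv₀ hRpos hQpos).mp h4
  · intro halt
    have h4 : cfVal Q ≤ cfVal (Rse x (n+1)) := (altLe_iff_cfVal_le Q _ hQd hR).mp halt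
    have h5 : (cfVal (Rse x (n+1)))⁻¹ ≤ (cfVal Q)⁻¹ := (inv_le_inv₀ hRpos hQpos).mpr h4
    linarith

end Keys

/-- Pattern 2,1,2 forces the height above 3. -/
lemma keyF3 (x : ℤ → ℕ) (hd : ∀ i, 1 ≤ x i) (hd2 : ∀ i, x i ≤ 2) (n : ℤ)
    (h0 : x n = 2) (h1 : x (n+1) = 1) (h2 : x (n+2) = 2) :
    3 < lamZ (shiftZ x n) := by
  have hdR : ∀ m : ℤ, ∀ j, 1 ≤ Rse x m j := fun m => Rse_digits x hd m
  have hdR2 : ∀ m : ℤ, ∀ j, Rse x m j ≤ 2 := fun m j => hd2 _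
  have hdL2 : ∀ j, Lse x n j ≤ 2 := fun j => hd2 _
  -- δ = cfVal (Rse x (n+3)) ≤ 11/4
  have hδ : cfVal (Rse x (n+3)) ≤ 11/4 := cfVal_le_114 _ (hdR (n+3)) (hdR2 (n+3))
  have hδpos : 0 < cfVal (Rse x (n+3)) := cfVal_pos _ (hdR (n+3))
  -- γ = cfVal (Rse x (n+2)) ≥ 26/11
  have hγe : cfVal (Rse x (n+2)) = (2:ℝ) + (cfVal (Rse x (n+3)))⁻¹ := by
    have := cfVal_Rse_succ x hd (n+2)
    rw [h2] at this
    rw [this, show n + 2 + 1 = n + 3 by ring]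
    norm_num
  have hγ : 26/11 ≤ cfVal (Rse x (n+2)) := by
    rw [hγe]
    have : (11:ℝ)/4 ≥ cfVal (Rse x (n+3)) := hδ
    have h4 : (4:ℝ)/11 ≤ (cfVal (Rse x (n+3)))⁻¹ := by
      rw [show (4:ℝ)/11 = (11/4 : ℝ)⁻¹ by norm_num]
      exact (inv_le_inv₀ (by norm_num) hδpos).mpr hδ
    linarith
  have hγpos : 0 < cfVal (Rse x (n+2)) := cfVal_pos _ (hdR (n+2))
  -- α = cfVal (Rse x (n+1)) ≤ 37/26
  have hαe : cfVal (Rse x (n+1)) = (1:ℝ) + (cfVal (Rse x (n+2)))⁻¹ := by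
    have := cfVal_Rse_succ x hd (n+1)
    rw [h1] at this
    rw [this, show n + 1 + 1 = n + 2 by ring]
    norm_num
  have hα : cfVal (Rse x (n+1)) ≤ 37/26 := by
    rw [hαe]
    have h4 : (cfVal (Rse x (n+2)))⁻¹ ≤ 11/26 := by
      rw [show (11:ℝ)/26 = (26/11 : ℝ)⁻¹ by norm_num]
      exact (inv_le_inv₀ hγpos (by norm_num)).mpr hγ
    linarith
  have hαpos : 0 < cfVal (Rse x (n+1)) := cfVal_pos _ (hdR (n+1))
  -- cfVal (Rse x n) ≥ 100/37
  have hRe : cfVal (Rse x n) = (2:ℝ) + (cfVal (Rse x (n+1)))⁻¹ := by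
    have := cfVal_Rse_succ x hd n
    rw [h0] at this
    rw [this]
    norm_num
  have hRn : 100/37 ≤ cfVal (Rse x n) := by
    rw [hRe]
    have h4 : (26:ℝ)/37 ≤ (cfVal (Rse x (n+1)))⁻¹ := by
      rw [show (26:ℝ)/37 = (37/26 : ℝ)⁻¹ by norm_num]
      exact (inv_le_inv₀ (by norm_num) hαpos).mpr hα
    linarith
  -- (cfVal (Lse x n))⁻¹ ≥ 4/11
  have hL : cfVal (Lse x n) ≤ 11/4 := cfVal_le_114 _ (Lse_digits x hd n) hdL2
  have hLpos : 0 < cfVal (Lse x n) := cfVal_pos _ (Lse_digits x hd n)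
  have hLi : (4:ℝ)/11 ≤ (cfVal (Lse x n))⁻¹ := by
    rw [show (4:ℝ)/11 = (11/4 : ℝ)⁻¹ by norm_num]
    exact (inv_le_inv₀ (by norm_num) hLpos).mpr hL
  rw [lam_formula]
  have : (100:ℝ)/37 + 4/11 > 3 := by norm_num
  linarith

/-- Positions with digit 1 never exceed 3. -/
lemma lam_one (x : ℤ → ℕ) (hd : ∀ i, 1 ≤ x i) (n : ℤ) (h0 : x n = 1) :
    lamZ (shiftZ x n) ≤ 3 := by
  have hR := (cfVal_mem (Rse x n) (Rse_digits x hd n)).2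
  rw [Rse_zero, h0] at hR
  have hL : 1 ≤ cfVal (Lse x n) := cfVal_one_le _ (Lse_digits x hd n)
  have : (cfVal (Lse x n))⁻¹ ≤ 1 := by
    rw [inv_le_one_iff₀]; right; exact hL
  rw [lam_formula]
  push_cast at hR
  linarith

/-- A digit 2 with 2 on both sides never exceeds 3. -/
lemma lam_interior (x : ℤ → ℕ) (hd : ∀ i, 1 ≤ x i) (n : ℤ)
    (h0 : x n = 2) (h1 : x (n+1) = 2) (hm : x (n-1) = 2) :
    lamZ (shiftZ x n) ≤ 3 := by
  have hα : (2:ℝ) ≤ cfVal (Rse x (n+1)) := by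
    have := (cfVal_mem (Rse x (n+1)) (Rse_digits x hd (n+1))).1
    rw [Rse_zero, h1] at this
    exact_mod_cast this
  have hαi : (cfVal (Rse x (n+1)))⁻¹ ≤ 1/2 := by
    rw [show (1:ℝ)/2 = (2:ℝ)⁻¹ by norm_num]
    exact (inv_le_inv₀ (by linarith) (by norm_num)).mpr hα
  have hβ : (2:ℝ) ≤ cfVal (Lse x n) := by
    have := (cfVal_mem (Lse x n) (Lse_digits x hd n)).1
    rw [Lse_zero, hm] at this
    exact_mod_cast this
  have hβi : (cfVal (Lse x n))⁻¹ ≤ 1/2 := by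
    rw [show (1:ℝ)/2 = (2:ℝ)⁻¹ by norm_num]
    exact (inv_le_inv₀ (by linarith) (by norm_num)).mpr hβ
  rw [lam_formula, cfVal_Rse_succ x hd n, h0]
  push_cast
  linarith

/-- A digit ≥ 3 forces the height above 3. -/
lemma lam_big (x : ℤ → ℕ) (hd : ∀ i, 1 ≤ x i) (n : ℤ) (h0 : 3 ≤ x n) :
    3 < lamZ (shiftZ x n) := by
  have hR := (cfVal_mem (Rse x n) (Rse_digits x hd n)).1
  rw [Rse_zero] at hR
  have h3 : (3:ℝ) ≤ (x n : ℝ) := by exact_mod_cast h0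
  have hL : 0 < (cfVal (Lse x n))⁻¹ :=
    inv_pos.mpr (cfVal_pos _ (Lse_digits x hd n))
  rw [lam_formula]
  linarith

/-! ### mVal infrastructure -/

lemma mVal_le_three_iff (x : ℤ → ℕ) :
    mVal x ≤ 3 ↔ ∀ n : ℤ, lamZ (shiftZ x n) ≤ 3 := by
  rw [mVal, iSup_le_iff]
  constructor
  · intro h n
    have := h n
    rw [show (3 : EReal) = ((3:ℝ) : EReal) by norm_cast] at this
    exact_mod_cast this
  · intro h n
    rw [show (3 : EReal) = ((3:ℝ) : EReal) by norm_cast]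
    exact_mod_cast h n

lemma mVal_shift (x : ℤ → ℕ) (k : ℤ) : mVal (shiftZ x k) = mVal x := by
  have hcomp : ∀ n : ℤ, shiftZ (shiftZ x k) n = shiftZ x (n + k) := by
    intro n; funext i; simp [shiftZ]; ring_nf
  apply le_antisymm
  · rw [mVal, iSup_le_iff]
    intro n
    rw [hcomp n]
    exact le_iSup (fun m : ℤ => ((lamZ (shiftZ x m) : EReal))) (n + k)
  · rw [mVal, iSup_le_iff]
    intro n
    have : lamZ (shiftZ x n) = lamZ (shiftZ (shiftZ x k) (n - k)) := by
      rw [hcomp (n - k)]; ring_nf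
    rw [this]
    exact le_iSup (fun m : ℤ => ((lamZ (shiftZ (shiftZ x k) m) : EReal))) (n - k)

lemma altLe_head (u w : ℕ → ℕ) (h : altLe u w) : u 0 ≤ w 0 := by
  rcases h with rfl | ⟨k, hag, hk⟩
  · exact le_refl _
  · rcases Nat.eq_zero_or_pos k with rfl | hpos
    · rcases hk with ⟨_, hlt⟩ | ⟨hne, _⟩
      · exact le_of_lt hlt
      · exact absurd Even.zero hne
    · exact le_of_eq (hag 0 hpos)

section Runs
variable (x : ℤ → ℕ)

/-- A maximal run of ℓ twos starting at n. -/
def Run2 (n : ℤ) (ℓ : ℕ) : Prop :=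
  x (n-1) = 1 ∧ (∀ i : ℕ, i < ℓ → x (n + i) = 2) ∧ x (n + ℓ) = 1

/-- A maximal run of ℓ ones starting at n. -/
def Run1 (n : ℤ) (ℓ : ℕ) : Prop :=
  x (n-1) = 2 ∧ (∀ i : ℕ, i < ℓ → x (n + i) = 1) ∧ x (n + ℓ) = 2

end Runs

section NoOdd
variable (x : ℤ → ℕ) (hd : ∀ i, 1 ≤ x i) (hd2 : ∀ i, x i ≤ 2)
  (hC : ∀ n : ℤ, lamZ (shiftZ x n) ≤ 3)
include hd hd2 hC

/-- Base case: no isolated 2. -/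
lemma noRun2_one (n : ℤ) : ¬ Run2 x n 1 := by
  rintro ⟨hm, hrun, hp⟩
  have h0 : x n = 2 := by simpa using hrun 0 (by norm_num)
  have h1 : x (n+1) = 1 := by simpa using hp
  rcases Nat.lt_or_ge (x (n+2)) 2 with h2 | h2
  · -- x (n+2) = 1
    have h2' : x (n+2) = 1 := by have := hd (n+2); omega
    have hkey := (keyF5 x hd n h0 h1 h2').mp (hC n)
    have hhead := altLe_head _ _ hkey
    have : sc 2 (Rse x (n+3)) 0 = 2 := rfl
    rw [this, Lse_zero, hm] at hhead
    omega
  · -- x (n+2) = 2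
    have h2' : x (n+2) = 2 := by have := hd2 (n+2); omega
    exact absurd (hC n) (not_le.mpr (keyF3 x hd hd2 n h0 h1 h2'))

/-- Descent: an odd maximal run of 2s of length ≥ 3 yields a shorter odd one. -/
lemma run2_descent (ℓ : ℕ) (hodd : Odd ℓ) (h3 : 3 ≤ ℓ) (n : ℤ) (hrun : Run2 x n ℓ) :
    ∃ d : ℕ, Odd d ∧ d < ℓ ∧ Run2 x (n + ℓ + 2) d := by
  obtain ⟨hm, hr, hp⟩ := hrun
  set M : ℤ := n + ℓ - 1 with hM
  have hxM : x M = 2 := by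
    have := hr (ℓ - 1) (by omega)
    rwa [show n + ((ℓ - 1 : ℕ) : ℤ) = M by rw [hM]; omega] at this
  have hxM1 : x (M + 1) = 1 := by
    rwa [show M + 1 = n + ℓ by rw [hM]; ring] 
  have hxMm : x (M - 1) = 2 := by
    have := hr (ℓ - 2) (by omega)
    rwa [show n + ((ℓ - 2 : ℕ) : ℤ) = M - 1 by rw [hM]; omega] at this
  -- x (M+2) = 1, else keyF3
  have hxM2 : x (M + 2) = 1 := by
    rcases Nat.lt_or_ge (x (M+2)) 2 with h | h
    · have := hd (M+2); omega
    · have h2' : x (M+2) = 2 := by have := hd2 (M+2); omega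
      exact absurd (hC M) (not_le.mpr (keyF3 x hd hd2 M hxM hxM1 h2'))
  have hkey := (keyF5 x hd M hxM hxM1 hxM2).mp (hC M)
  set u := sc 2 (Rse x (M+3)) with hu
  set w := Lse x M with hw
  -- structure of w
  have hw2 : ∀ j : ℕ, j < ℓ - 1 → w j = 2 := by
    intro j hj
    have := hr (ℓ - 2 - j) (by omega)
    rw [hw, Lse]
    rwa [show n + ((ℓ - 2 - j : ℕ) : ℤ) = M - 1 - j by rw [hM]; omega] at this
  have hw1 : w (ℓ - 1) = 1 := by
    rw [hw, Lse]
    rwa [show M - 1 - ((ℓ - 1 : ℕ) : ℤ) = n - 1 by rw [hM]; omega]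
  have hu0 : u 0 = 2 := rfl
  have husucc : ∀ j : ℕ, u (j + 1) = x (M + 3 + j) := by
    intro j; rfl
  -- extraction
  have hfromagree : (∀ j : ℕ, j ≤ ℓ - 1 → u j = w j) →
      ∃ d : ℕ, Odd d ∧ d < ℓ ∧ Run2 x (n + ℓ + 2) d := by
    intro hag
    refine ⟨ℓ - 2, ?_, by omega, ?_, ?_, ?_⟩
    · rcases hodd with ⟨t, rfl⟩; exact ⟨t - 1, by omega⟩
    · rwa [show (n + ℓ + 2 : ℤ) - 1 = M + 2 by rw [hM]; ring]
    · intro i hi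
      have := (hag (i+1) (by omega)).trans (hw2 (i+1) (by omega))
      rw [husucc i] at this
      rwa [show n + ℓ + 2 + (i:ℤ) = M + 3 + i by rw [hM]; ring]
    · have h9 := (hag (ℓ-1) (by omega)).trans hw1
      rw [show ℓ - 1 = (ℓ - 2) + 1 by omega, husucc (ℓ-2)] at h9
      rwa [show n + ℓ + 2 + ((ℓ - 2:ℕ):ℤ) = M + 3 + ((ℓ-2:ℕ):ℤ) by rw [hM]; ring]
  rcases hkey with heq | ⟨k, hag, hk⟩
  · -- u = w
    apply hfromagree
    intro j _
    exact congrFun heq j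
  · rcases Nat.lt_or_ge k ℓ with hkl | hkl
    · -- k ≤ ℓ - 1
      rcases Nat.eq_zero_or_pos k with rfl | hkpos
      · rw [hu0, hw2 0 (by omega)] at hk
        rcases hk with ⟨_, hlt⟩ | ⟨_, hlt⟩ <;> omega
      · rcases Nat.lt_or_ge k (ℓ - 1) with hk2 | hk2
        · -- 1 ≤ k < ℓ-1, w k = 2
          have hwk := hw2 k hk2
          rcases hk with ⟨hev, hlt⟩ | ⟨hne, hlt⟩
          · -- u k < 2, so u k = 1, k even
            have huk : u k = 1 := by
              have h1 : 1 ≤ u k := by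
                rw [hu]
                cases k with
                | zero => omega
                | succ m => exact hd _
              omega
            have hkeven : k % 2 = 0 := Nat.even_iff.mp hev
            refine ⟨k - 1, ?_, by omega, ?_, ?_, ?_⟩
            · exact Nat.odd_iff.mpr (by omega)
            · rwa [show (n + ℓ + 2 : ℤ) - 1 = M + 2 by rw [hM]; ring]
            · intro i hi
              have := (hag (i+1) (by omega)).trans (hw2 (i+1) (by omega))
              rw [husucc i] at this
              rwa [show n + ℓ + 2 + (i:ℤ) = M + 3 + i by rw [hM]; ring]
            · have : u k = 1 := huk
              rw [show k = (k - 1) + 1 by omega, husucc (k-1)] at this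
              rwa [show n + ℓ + 2 + ((k-1:ℕ):ℤ) = M + 3 + ((k-1:ℕ):ℤ) by rw [hM]; ring]
          · -- w k < u k : impossible since u k ≤ 2 = w k
            have huk : u k ≤ 2 := by
              rw [hu]
              cases k with
              | zero => omega
              | succ m => exact hd2 _
            omega
        · -- k = ℓ - 1, w k = 1, k even (ℓ odd)
          have hkeq : k = ℓ - 1 := by omega
          subst hkeq
          rw [hw1] at hk
          have hkeven : Even (ℓ - 1) := by
            rcases hodd with ⟨t, rfl⟩; exact ⟨t, by omega⟩
          rcases hk with ⟨_, hlt⟩ | ⟨hne, _⟩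
          · have : 1 ≤ u (ℓ-1) := by
              rw [hu]
              cases hh : ℓ - 1 with
              | zero => omega
              | succ m => exact hd _
            omega
          · exact absurd hkeven hne
    · -- k ≥ ℓ: full agreement on [0, ℓ-1]
      apply hfromagree
      intro j hj
      exact hag j (by omega)


/-- Base case: no isolated 1. -/
lemma noRun1_one (n : ℤ) : ¬ Run1 x n 1 := by
  rintro ⟨hm, hrun, hp⟩
  have h0 : x n = 1 := by simpa using hrun 0 (by norm_num)
  have h1 : x (n+1) = 2 := by simpa using hp
  have hkey := keyF3 x hd hd2 (n-1) hm (by rwa [show n - 1 + 1 = n by ring]) 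
    (by rwa [show n - 1 + 2 = n + 1 by ring])
  exact absurd (hC (n-1)) (not_le.mpr hkey)

/-- The full no-odd-run-of-2s statement, by strong induction. -/
lemma noOdd2 : ∀ ℓ : ℕ, Odd ℓ → ∀ n : ℤ, ¬ Run2 x n ℓ := by
  intro ℓ
  induction ℓ using Nat.strong_induction_on with
  | _ ℓ ih =>
    intro hodd n hrun
    rcases Nat.lt_or_ge ℓ 3 with h3 | h3
    · have : ℓ = 1 := by rcases hodd with ⟨t, rfl⟩; omega
      subst this
      exact noRun2_one x hd hd2 hC n hrun
    · obtain ⟨d, hdodd, hdlt, hdrun⟩ := run2_descent x hd hd2 hC ℓ hodd h3 n hrun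
      exact ih d hdlt hdodd _ hdrun

/-- Descent for runs of 1s. -/
lemma run1_descent (ℓ : ℕ) (hodd : Odd ℓ) (h3 : 3 ≤ ℓ) (n : ℤ) (hrun : Run1 x n ℓ) :
    ∃ d : ℕ, Odd d ∧ d < ℓ ∧ Run1 x (n + ℓ + 2) d := by
  obtain ⟨hm, hr, hp⟩ := hrun
  set P : ℤ := n + ℓ with hP
  have hxP : x P = 2 := hp
  have hxPm : x (P - 1) = 1 := by
    have := hr (ℓ - 1) (by omega)
    rwa [show n + ((ℓ - 1 : ℕ) : ℤ) = P - 1 by rw [hP]; omega] at this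
  have hxPm2 : x (P - 2) = 1 := by
    have := hr (ℓ - 2) (by omega)
    rwa [show n + ((ℓ - 2 : ℕ) : ℤ) = P - 2 by rw [hP]; omega] at this
  -- x (P+1) = 2, else isolated 2
  have hxP1 : x (P + 1) = 2 := by
    rcases Nat.lt_or_ge (x (P+1)) 2 with h | h
    · exfalso
      apply noRun2_one x hd hd2 hC P
      refine ⟨hxPm, ?_, ?_⟩
      · intro i hi
        have : i = 0 := by omega
        subst this
        simpa using hxP
      · have h1 : x (P+1) = 1 := by have := hd (P+1); omega
        simpa using h1
    · have := hd2 (P+1); omega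
  have hkey := (keyF5sym x hd P hxP hxPm hxPm2).mp (hC P)
  set u := sc 2 (Lse x (P-2)) with hu
  set w := Rse x (P+1) with hw
  have hu1 : ∀ j : ℕ, 1 ≤ j → j ≤ ℓ - 2 → u j = 1 := by
    intro j hj1 hj2
    have := hr (ℓ - 2 - j) (by omega)
    rw [hu, show j = (j - 1) + 1 by omega]
    show Lse x (P-2) (j-1) = 1
    rw [Lse]
    rwa [show n + ((ℓ - 2 - j : ℕ) : ℤ) = P - 2 - 1 - ((j - 1 : ℕ) : ℤ) by rw [hP]; omega] at this
  have huℓ : u (ℓ - 1) = 2 := by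
    rw [hu, show ℓ - 1 = (ℓ - 2) + 1 by omega]
    show Lse x (P-2) (ℓ-2) = 2
    rw [Lse]
    rwa [show P - 2 - 1 - ((ℓ - 2 : ℕ) : ℤ) = n - 1 by rw [hP]; omega]
  have hu0 : u 0 = 2 := rfl
  have hwsucc : ∀ j : ℕ, w j = x (P + 1 + j) := fun j => rfl
  have hw0 : w 0 = 2 := by rw [hwsucc 0]; simpa using hxP1
  have hfromagree : (∀ j : ℕ, j ≤ ℓ - 1 → u j = w j) →
      ∃ d : ℕ, Odd d ∧ d < ℓ ∧ Run1 x (n + ℓ + 2) d := by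
    intro hag
    refine ⟨ℓ - 2, ?_, by omega, ?_, ?_, ?_⟩
    · rcases hodd with ⟨t, rfl⟩; exact ⟨t - 1, by omega⟩
    · rwa [show (n + ℓ + 2 : ℤ) - 1 = P + 1 by rw [hP]; ring]
    · intro i hi
      have h9 := ((hag (i+1) (by omega)).symm).trans (hu1 (i+1) (by omega) (by omega))
      rw [hwsucc (i+1)] at h9
      rwa [show n + ℓ + 2 + (i:ℤ) = P + 1 + ((i+1:ℕ):ℤ) by rw [hP]; push_cast; ring]
    · have h9 := ((hag (ℓ-1) (by omega)).symm).trans huℓ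
      rw [hwsucc (ℓ-1)] at h9
      rwa [show n + ℓ + 2 + ((ℓ-2:ℕ):ℤ) = P + 1 + ((ℓ-1:ℕ):ℤ) by rw [hP]; omega]
  rcases hkey with heq | ⟨k, hag, hk⟩
  · apply hfromagree
    intro j _
    exact congrFun heq j
  · rcases Nat.lt_or_ge k ℓ with hkl | hkl
    · rcases Nat.eq_zero_or_pos k with rfl | hkpos
      · rw [hu0, hw0] at hk
        rcases hk with ⟨_, hlt⟩ | ⟨_, hlt⟩ <;> omega
      · rcases Nat.lt_or_ge k (ℓ - 1) with hk2 | hk2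
        · -- 1 ≤ k < ℓ-1, u k = 1
          have huk := hu1 k (by omega) (by omega)
          rcases hk with ⟨hev, hlt⟩ | ⟨hne, hlt⟩
          · -- u k < w k, so w k = 2, k even
            have hwk : w k = 2 := by
              have h8 := hd2 (P + 1 + (k:ℤ))
              rw [hwsucc k] at hlt ⊢
              omega
            have hkeven : k % 2 = 0 := Nat.even_iff.mp hev
            refine ⟨k - 1, ?_, by omega, ?_, ?_, ?_⟩
            · exact Nat.odd_iff.mpr (by omega)
            · rwa [show (n + ℓ + 2 : ℤ) - 1 = P + 1 by rw [hP]; ring]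
            · intro i hi
              have h9 := ((hag (i+1) (by omega)).symm).trans (hu1 (i+1) (by omega) (by omega))
              rw [hwsucc (i+1)] at h9
              rwa [show n + ℓ + 2 + (i:ℤ) = P + 1 + ((i+1:ℕ):ℤ) by rw [hP]; push_cast; ring]
            · rw [hwsucc k] at hwk
              rwa [show n + ℓ + 2 + ((k-1:ℕ):ℤ) = P + 1 + (k:ℤ) by rw [hP]; omega]
          · -- w k < u k = 1: impossible
            have := hd (P + 1 + k)
            rw [hwsucc k] at hlt
            omega
        · -- k = ℓ - 1: u k = 2 and w k ≤ 2, k even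
          have hkeq : k = ℓ - 1 := by omega
          subst hkeq
          rw [huℓ] at hk
          have hkeven : Even (ℓ - 1) := by
            rcases hodd with ⟨t, rfl⟩; exact ⟨t, by omega⟩
          rcases hk with ⟨_, hlt⟩ | ⟨hne, _⟩
          · have := hd2 (P + 1 + ((ℓ-1:ℕ):ℤ))
            rw [hwsucc (ℓ-1)] at hlt
            omega
          · exact absurd hkeven hne
    · apply hfromagree
      intro j hj
      exact hag j (by omega)

/-- The full no-odd-run-of-1s statement. -/
lemma noOdd1 : ∀ ℓ : ℕ, Odd ℓ → ∀ n : ℤ, ¬ Run1 x n ℓ := by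
  intro ℓ
  induction ℓ using Nat.strong_induction_on with
  | _ ℓ ih =>
    intro hodd n hrun
    rcases Nat.lt_or_ge ℓ 3 with h3 | h3
    · have : ℓ = 1 := by rcases hodd with ⟨t, rfl⟩; omega
      subst this
      exact noRun1_one x hd hd2 hC n hrun
    · obtain ⟨d, hdodd, hdlt, hdrun⟩ := run1_descent x hd hd2 hC ℓ hodd h3 n hrun
      exact ih d hdlt hdodd _ hdrun

end NoOdd

section Parity
variable (x : ℤ → ℕ) (hd : ∀ i, 1 ≤ x i) (hd2 : ∀ i, x i ≤ 2)
  (hC : ∀ n : ℤ, lamZ (shiftZ x n) ≤ 3)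
include hd hd2 hC

lemma bdry_even : ∀ N : ℕ, ∀ q : ℤ, x q ≠ x (q+1) → x (q + N) ≠ x (q + N + 1) → Even N := by
  intro N
  induction N using Nat.strong_induction_on with
  | _ N ih =>
    intro q hq hN
    rcases Nat.eq_zero_or_pos N with rfl | hNpos
    · exact Even.zero
    · classical
      have hex : ∃ r : ℕ, 0 < r ∧ x (q + r) ≠ x (q + r + 1) := ⟨N, hNpos, hN⟩
      obtain ⟨r₀, ⟨hr₀pos, hr₀bd⟩, hr₀min⟩ :
          ∃ r₀ : ℕ, (0 < r₀ ∧ x (q + r₀) ≠ x (q + r₀ + 1)) ∧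
            ∀ m : ℕ, m < r₀ → ¬(0 < m ∧ x (q + m) ≠ x (q + m + 1)) :=
        ⟨Nat.find hex, Nat.find_spec hex, fun m hm => Nat.find_min hex hm⟩
      have hr₀le : r₀ ≤ N := by
        by_contra hgt
        exact (hr₀min N (by omega)) ⟨hNpos, hN⟩
      -- constancy on the in-between stretch
      have hconst : ∀ e : ℕ, e < r₀ → x (q + 1 + e) = x (q + 1) := by
        intro e
        induction e with
        | zero => intro _; norm_num
        | succ m ihm =>
          intro hlt
          have hnb : ¬ (0 < m + 1 ∧ x (q + ((m+1):ℕ)) ≠ x (q + ((m+1):ℕ) + 1)) :=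
            hr₀min (m+1) (by omega)
          push_neg at hnb
          have heq : x (q + (m+1)) = x (q + (m+1) + 1) := hnb (by omega)
          have : x (q + 1 + ((m+1):ℕ)) = x (q + 1 + (m:ℕ)) := by
            rw [show q + 1 + ((m+1):ℕ) = q + ((m+1):ℕ) + 1 by push_cast; ring,
              show q + 1 + (m:ℕ) = q + ((m+1):ℕ) by push_cast; ring]
            exact heq.symm
          rw [this, ihm (by omega)]
      -- the run between q and q + r₀ is maximal of length r₀
      have hrun : Even r₀ := by
        have hc : x (q+1) = 1 ∨ x (q+1) = 2 := by
          have := hd (q+1); have := hd2 (q+1); omega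
        rcases Nat.even_or_odd r₀ with he | ho
        · exact he
        · exfalso
          rcases hc with hc | hc
          · apply noOdd1 x hd hd2 hC r₀ ho (q+1)
            refine ⟨?_, ?_, ?_⟩
            · have h8 := hd q; have h9 := hd2 q
              rw [show q + 1 - 1 = q by ring]
              rw [hc] at hq
              omega
            · intro i hi
              rw [show q + 1 + (i:ℤ) = q + 1 + (i:ℕ) by norm_num, hconst i hi, hc]
            · have hlast : x (q + (r₀:ℤ)) = 1 := by
                rcases Nat.eq_or_lt_of_le hr₀pos with h1 | h1
                · rw [← h1]; simpa using hc
                · have := hconst (r₀ - 1) (by omega)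
                  rw [show q + 1 + ((r₀-1:ℕ):ℤ) = q + (r₀:ℤ) by omega] at this
                  rw [this, hc]
              have h8 := hd (q + r₀ + 1); have h9 := hd2 (q + r₀ + 1)
              rw [show q + 1 + (r₀:ℤ) = q + (r₀:ℤ) + 1 by ring]
              rw [hlast] at hr₀bd
              omega
          · apply noOdd2 x hd hd2 hC r₀ ho (q+1)
            refine ⟨?_, ?_, ?_⟩
            · have h8 := hd q; have h9 := hd2 q
              rw [show q + 1 - 1 = q by ring]
              rw [hc] at hq
              omega
            · intro i hi
              rw [show q + 1 + (i:ℤ) = q + 1 + (i:ℕ) by norm_num, hconst i hi, hc]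
            · have hlast : x (q + (r₀:ℤ)) = 2 := by
                rcases Nat.eq_or_lt_of_le hr₀pos with h1 | h1
                · rw [← h1]; simpa using hc
                · have := hconst (r₀ - 1) (by omega)
                  rw [show q + 1 + ((r₀-1:ℕ):ℤ) = q + (r₀:ℤ) by omega] at this
                  rw [this, hc]
              have h8 := hd (q + r₀ + 1); have h9 := hd2 (q + r₀ + 1)
              rw [show q + 1 + (r₀:ℤ) = q + (r₀:ℤ) + 1 by ring]
              rw [hlast] at hr₀bd
              omega
      rcases Nat.eq_or_lt_of_le hr₀le with heq | hlt
      · rwa [heq] at hrun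
      · have hrest := ih (N - r₀) (by omega) (q + r₀) hr₀bd
          (by have e : q + (r₀:ℤ) + ((N - r₀:ℕ):ℤ) = q + (N:ℤ) := by omega
              rw [e]; exact hN)
        have : N = r₀ + (N - r₀) := by omega
        rw [this]
        exact hrun.add hrest

lemma bdry_parity (p q : ℤ) (hp : x p ≠ x (p+1)) (hq : x q ≠ x (q+1)) : (p - q) % 2 = 0 := by
  rcases le_total q p with h | h
  · have hN : p = q + ((p - q).toNat : ℤ) := by omega
    have := bdry_even x hd hd2 hC (p - q).toNat q hq (by rw [← hN]; exact hp)
    rcases this with ⟨t, ht⟩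
    omega
  · have hN : q = p + ((q - p).toNat : ℤ) := by omega
    have := bdry_even x hd hd2 hC (q - p).toNat p hp (by rw [← hN]; exact hq)
    rcases this with ⟨t, ht⟩
    omega

lemma pairing : ∃ k : ℤ, ∀ i : ℤ, x (2*i + k) = x (2*i + 1 + k) := by
  by_cases hB : ∃ p : ℤ, x p ≠ x (p+1)
  · obtain ⟨p0, hp0⟩ := hB
    refine ⟨p0 + 1, ?_⟩
    intro i
    by_contra hne
    have hb : x (2*i + p0 + 1) ≠ x ((2*i + p0 + 1) + 1) := by
      rw [show (2*i + p0 + 1 : ℤ) = 2*i + (p0 + 1) by ring,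
        show (2*i + (p0+1) + 1 : ℤ) = 2*i + 1 + (p0+1) by ring]
      exact hne
    have := bdry_parity x hd hd2 hC (2*i + p0 + 1) p0 hb hp0
    omega
  · push_neg at hB
    refine ⟨0, ?_⟩
    intro i
    have := hB (2*i)
    rw [show 2*i + (0:ℤ) = 2*i by ring, show 2*i + 1 + (0:ℤ) = 2*i + 1 by ring]
    exact this

end Parity

/-! ### χ correspondence -/

lemma chiVal_one_le (c : AB) : 1 ≤ chiVal c := by cases c <;> simp [chiVal]
lemma chiVal_le_two (c : AB) : chiVal c ≤ 2 := by cases c <;> simp [chiVal]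
lemma chiVal_inj {c d : AB} (h : chiVal c = chiVal d) : c = d := by
  cases c <;> cases d <;> simp_all [chiVal]

lemma chiInf_digits (s : ℕ → AB) : ∀ i, 1 ≤ chiInf s i := fun i => chiVal_one_le _

/-- The main order correspondence: χ reverses the order (altLe vs lexLe). -/
lemma altLe_chiInf_iff (s t : ℕ → AB) : altLe (chiInf s) (chiInf t) ↔ lexLe t s := by
  constructor
  · rintro (heq | ⟨k, hag, hk⟩)
    · left
      funext i
      have := congrFun heq (2*i)
      simp only [chiInf] at this
      rw [show 2*i/2 = i by omega] at this
      exact (chiVal_inj this).symm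
    · -- first difference at k; k must be even
      have hne : s (k/2) ≠ t (k/2) := by
        intro hcontra
        have : chiInf s k = chiInf t k := by simp [chiInf, hcontra]
        rcases hk with ⟨_, hlt⟩ | ⟨_, hlt⟩ <;> omega
      have hkev : k % 2 = 0 := by
        by_contra hodd
        have h2 : (2*(k/2) : ℕ) < k := by omega
        have := hag (2*(k/2)) h2
        simp only [chiInf] at this
        rw [show 2*(k/2)/2 = k/2 by omega] at this
        exact hne (chiVal_inj this)
      have hEv : Even k := Nat.even_iff.mpr hkev
      rcases hk with ⟨_, hlt⟩ | ⟨hne', _⟩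
      · -- chiVal (s (k/2)) < chiVal (t (k/2)) : s = b, t = a
        right
        refine ⟨k/2, ?_, ?_, ?_⟩
        · intro j hj
          have := hag (2*j) (by omega)
          simp only [chiInf] at this
          rw [show 2*j/2 = j by omega] at this
          exact (chiVal_inj this).symm
        · -- t (k/2) = a
          simp only [chiInf] at hlt
          rcases hs : s (k/2) <;> rcases ht : t (k/2) <;>
            rw [hs, ht] at hlt <;> simp [chiVal] at hlt <;> rfl
        · simp only [chiInf] at hlt
          rcases hs : s (k/2) <;> rcases ht : t (k/2) <;>
            rw [hs, ht] at hlt <;> simp [chiVal] at hlt <;> rfl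
      · exact absurd hEv hne'
  · rintro (heq | ⟨k, hag, hta, hsb⟩)
    · left
      rw [heq]
    · right
      refine ⟨2*k, ?_, Or.inl ⟨⟨k, by ring⟩, ?_⟩⟩
      · intro j hj
        simp only [chiInf]
        rw [(hag (j/2) (by omega)).symm]
      · simp only [chiInf]
        rw [show 2*k/2 = k by omega, hta, hsb]
        simp [chiVal]

/-- Splitting off the first letter of a χ-image. -/
lemma chiInf_split (s : ℕ → AB) :
    chiInf s = sc (chiVal (s 0)) (sc (chiVal (s 0)) (chiInf (fun q => s (q+1)))) := by
  funext j
  match j with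
  | 0 => simp [chiInf, sc]
  | 1 => simp [chiInf, sc]
  | (m+2) =>
    show chiVal (s ((m+2)/2)) = chiVal ((fun q => s (q+1)) (m/2))
    rw [show (m+2)/2 = m/2 + 1 by omega]

section Aligned
variable (x : ℤ → ℕ) (v : ℤ → AB)
  (hv : ∀ i : ℤ, x (2*i) = chiVal (v i) ∧ x (2*i+1) = chiVal (v i))
include hv

lemma Rse_chi (m : ℤ) : Rse x (2*m) = chiInf (fun q => v (m + q)) := by
  funext j
  rcases Nat.even_or_odd j with ⟨c, hc⟩ | ⟨c, hc⟩
  · have h1 : (2*m + (j:ℤ)) = 2*(m + c) := by omega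
    have h2 : j / 2 = c := by omega
    show x (2*m + (j:ℤ)) = chiVal (v (m + (j/2 : ℕ)))
    rw [h1, h2, (hv (m + c)).1]
  · have h1 : (2*m + (j:ℤ)) = 2*(m + c) + 1 := by omega
    have h2 : j / 2 = c := by omega
    show x (2*m + (j:ℤ)) = chiVal (v (m + (j/2 : ℕ)))
    rw [h1, h2, (hv (m + c)).2]

lemma Lse_chi (m : ℤ) : Lse x (2*m) = chiInf (fun q => v (m - 1 - q)) := by
  funext j
  rcases Nat.even_or_odd j with ⟨c, hc⟩ | ⟨c, hc⟩
  · have h1 : (2*m - 1 - (j:ℤ)) = 2*(m - 1 - c) + 1 := by omega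
    have h2 : j / 2 = c := by omega
    show x (2*m - 1 - (j:ℤ)) = chiVal (v (m - 1 - (j/2 : ℕ)))
    rw [h1, h2, (hv (m - 1 - c)).2]
  · have h1 : (2*m - 1 - (j:ℤ)) = 2*(m - 1 - c) := by omega
    have h2 : j / 2 = c := by omega
    show x (2*m - 1 - (j:ℤ)) = chiVal (v (m - 1 - (j/2 : ℕ)))
    rw [h1, h2, (hv (m - 1 - c)).1]

lemma x_digits_chi : ∀ i : ℤ, 1 ≤ x i ∧ x i ≤ 2 := by
  intro i
  rcases Int.even_or_odd' i with ⟨m, hm | hm⟩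
  · rw [hm, (hv m).1]
    exact ⟨chiVal_one_le _, chiVal_le_two _⟩
  · rw [hm, (hv m).2]
    exact ⟨chiVal_one_le _, chiVal_le_two _⟩

end Aligned

lemma altLe_sc2 (c : ℕ) (u w : ℕ → ℕ) : altLe (sc c (sc c u)) (sc c (sc c w)) ↔ altLe u w := by
  rw [altLe_cons, altLe_cons]

section Backward
variable (x : ℤ → ℕ) (v : ℤ → AB)
  (hv : ∀ i : ℤ, x (2*i) = chiVal (v i) ∧ x (2*i+1) = chiVal (v i))
  (hlex : ∀ i : ℤ,
    (v i = AB.b ∧ v (i + 1) = AB.a →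
      lexLe (fun j : ℕ => v (i - 1 - (j : ℤ))) (fun j : ℕ => v (i + 2 + (j : ℤ)))) ∧
    (v i = AB.a ∧ v (i + 1) = AB.b →
      lexLe (fun j : ℕ => v (i + 2 + (j : ℤ))) (fun j : ℕ => v (i - 1 - (j : ℤ)))))
include hv hlex

lemma backward_lam (n : ℤ) : lamZ (shiftZ x n) ≤ 3 := by
  have hd : ∀ i, 1 ≤ x i := fun i => (x_digits_chi x v hv i).1
  have hd2 : ∀ i, x i ≤ 2 := fun i => (x_digits_chi x v hv i).2
  rcases Int.even_or_odd' n with ⟨i, hn | hn⟩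
  · -- n = 2 i
    subst hn
    rcases hvi : v i with _ | _
    · -- v i = a : x n = 2, x (n+1) = 2
      rcases hvm : v (i-1) with _ | _
      · -- v (i-1) = a : interior
        apply lam_interior x hd
        · rw [(hv i).1, hvi]; rfl
        · rw [show 2*i+1 = 2*i+1 by rfl, (hv i).2, hvi]; rfl
        · rw [show 2*i-1 = 2*(i-1)+1 by ring, (hv (i-1)).2, hvm]; rfl
      · -- v (i-1) = b : left boundary, use keyF4 and the ba-condition at i-1
        rw [keyF4 x hd (2*i) (by rw [(hv i).1, hvi]; rfl)
          (by rw [(hv i).2, hvi]; rfl)]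
        have hA : Rse x (2*i+2) = chiInf (fun q : ℕ => v (i+1+q)) := by
          rw [show (2*i+2 : ℤ) = 2*(i+1) by ring, Rse_chi x v hv (i+1)]
        have hB : Lse x (2*i) = chiInf (fun q : ℕ => v (i-1-q)) := Lse_chi x v hv i
        have hsplit : chiInf (fun q : ℕ => v (i-1-q)) =
            sc 1 (sc 1 (chiInf (fun q : ℕ => v (i-2-q)))) := by
          rw [chiInf_split]
          have h0 : v (i-1-(0:ℕ)) = AB.b := by simpa using hvm
          rw [h0]
          have : (fun q : ℕ => v (i-1-(q+1:ℕ))) = (fun q : ℕ => v (i-2-q)) := by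
            funext q; congr 1; push_cast; ring
          rw [this]
          rfl
        rw [hA, hB, hsplit, altLe_sc2, altLe_chiInf_iff]
        have := (hlex (i-1)).1 ⟨hvm, by rw [show i-1+1 = i by ring, hvi]⟩
        have e1 : (fun j : ℕ => v (i-1-1-(j:ℤ))) = (fun q : ℕ => v (i-2-q)) := by
          funext q; congr 1; ring
        have e2 : (fun j : ℕ => v (i-1+2+(j:ℤ))) = (fun q : ℕ => v (i+1+q)) := by
          funext q; congr 1; ring
        rwa [e1, e2] at this
    · -- v i = b : digit 1
      apply lam_one x hd
      rw [(hv i).1, hvi]; rfl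
  · -- n = 2 i + 1
    subst hn
    rcases hvi : v i with _ | _
    · -- v i = a
      rcases hvp : v (i+1) with _ | _
      · -- interior
        apply lam_interior x hd
        · rw [(hv i).2, hvi]; rfl
        · rw [show 2*i+1+1 = 2*(i+1) by ring, (hv (i+1)).1, hvp]; rfl
        · rw [show 2*i+1-1 = 2*i by ring, (hv i).1, hvi]; rfl
      · -- right boundary: keyF4sym and the ab-condition at i
        rw [keyF4sym x hd (2*i+1) (by rw [(hv i).2, hvi]; rfl)
          (by rw [show 2*i+1-1 = 2*i by ring, (hv i).1, hvi]; rfl)]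
        have hB : Lse x (2*i+1-1) = chiInf (fun q : ℕ => v (i-1-q)) := by
          rw [show (2*i+1-1 : ℤ) = 2*i by ring, Lse_chi x v hv i]
        have hA : Rse x (2*i+1+1) = chiInf (fun q : ℕ => v (i+1+q)) := by
          rw [show (2*i+1+1 : ℤ) = 2*(i+1) by ring, Rse_chi x v hv (i+1)]
        have hsplit : chiInf (fun q : ℕ => v (i+1+q)) =
            sc 1 (sc 1 (chiInf (fun q : ℕ => v (i+2+q)))) := by
          rw [chiInf_split]
          have h0 : v (i+1+(0:ℕ)) = AB.b := by simpa using hvp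
          rw [h0]
          have : (fun q : ℕ => v (i+1+(q+1:ℕ))) = (fun q : ℕ => v (i+2+q)) := by
            funext q; congr 1; push_cast; ring
          rw [this]
          rfl
        rw [hA, hB, hsplit, altLe_sc2, altLe_chiInf_iff]
        exact (hlex i).2 ⟨hvi, hvp⟩
    · -- v i = b
      apply lam_one x hd
      rw [(hv i).2, hvi]; rfl
end Backward

lemma forward_dir (x : ℤ → ℕ) (hx : ∀ i, 0 < x i) (hm : mVal x ≤ 3) :
    ∃ (v : ℤ → AB) (k : ℤ),
      (∀ i : ℤ, x (2 * i + k) = chiVal (v i) ∧ x (2 * i + 1 + k) = chiVal (v i)) ∧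
      (∀ i : ℤ,
        (v i = AB.b ∧ v (i + 1) = AB.a →
          lexLe (fun j : ℕ => v (i - 1 - (j : ℤ))) (fun j : ℕ => v (i + 2 + (j : ℤ)))) ∧
        (v i = AB.a ∧ v (i + 1) = AB.b →
          lexLe (fun j : ℕ => v (i + 2 + (j : ℤ))) (fun j : ℕ => v (i - 1 - (j : ℤ))))) := by
  have hC : ∀ n : ℤ, lamZ (shiftZ x n) ≤ 3 := (mVal_le_three_iff x).mp hm
  have hd : ∀ i, 1 ≤ x i := hx
  have hd2 : ∀ i, x i ≤ 2 := by
    intro i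
    by_contra hgt
    exact absurd (hC i) (not_le.mpr (lam_big x hd i (by omega)))
  obtain ⟨k, hpair⟩ := pairing x hd hd2 hC
  set v : ℤ → AB := fun i => if x (2*i + k) = 1 then AB.b else AB.a with hvdef
  have h1 : ∀ i : ℤ, x (2 * i + k) = chiVal (v i) ∧ x (2 * i + 1 + k) = chiVal (v i) := by
    intro i
    have h12 : x (2*i + k) = 1 ∨ x (2*i + k) = 2 := by
      have := hd (2*i+k); have := hd2 (2*i+k); omega
    rcases h12 with h | h
    · have : v i = AB.b := by rw [hvdef]; simp [h]
      rw [this, ← hpair i, h]; exact ⟨rfl, rfl⟩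
    · have : v i = AB.a := by rw [hvdef]; simp [h]
      rw [this, ← hpair i, h]; exact ⟨rfl, rfl⟩
  set x' : ℤ → ℕ := shiftZ x k with hx'def
  have hv : ∀ i : ℤ, x' (2*i) = chiVal (v i) ∧ x' (2*i+1) = chiVal (v i) := by
    intro i
    constructor
    · show x (2*i + k) = chiVal (v i); exact (h1 i).1
    · show x (2*i + 1 + k) = chiVal (v i); exact (h1 i).2
  have hd' : ∀ i, 1 ≤ x' i := fun i => hd _
  have hC' : ∀ n : ℤ, lamZ (shiftZ x' n) ≤ 3 := by
    intro n
    have : shiftZ x' n = shiftZ x (n + k) := by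
      funext i; show x (i + n + k) = x (i + (n + k)); ring_nf
    rw [this]; exact hC (n + k)
  refine ⟨v, k, h1, ?_⟩
  intro i
  constructor
  · rintro ⟨hvb, hva⟩
    have h0 : x' (2*i+2) = 2 := by
      rw [show (2*i+2 : ℤ) = 2*(i+1) by ring, (hv (i+1)).1, hva]; rfl
    have h1' : x' (2*i+2+1) = 2 := by
      rw [show (2*i+2+1 : ℤ) = 2*(i+1)+1 by ring, (hv (i+1)).2, hva]; rfl
    have key := (keyF4 x' hd' (2*i+2) h0 h1').mp (hC' (2*i+2))
    have hA : Rse x' (2*i+2+2) = chiInf (fun q : ℕ => v (i+2+q)) := by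
      rw [show (2*i+2+2 : ℤ) = 2*(i+2) by ring, Rse_chi x' v hv (i+2)]
    have hB : Lse x' (2*i+2) = chiInf (fun q : ℕ => v (i-q)) := by
      rw [show (2*i+2 : ℤ) = 2*(i+1) by ring, Lse_chi x' v hv (i+1)]
      congr 1
      funext q; congr 1; ring
    have hsplit : chiInf (fun q : ℕ => v (i-q)) =
        sc 1 (sc 1 (chiInf (fun q : ℕ => v (i-1-q)))) := by
      rw [chiInf_split]
      have h9 : v (i-(0:ℕ)) = AB.b := by simpa using hvb
      rw [h9]
      have : (fun q : ℕ => v (i-(q+1:ℕ))) = (fun q : ℕ => v (i-1-q)) := by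
        funext q; congr 1; push_cast; ring
      rw [this]
      rfl
    rw [hA, hB, hsplit, altLe_sc2, altLe_chiInf_iff] at key
    exact key
  · rintro ⟨hva, hvb⟩
    have h0 : x' (2*i+1) = 2 := by
      rw [(hv i).2, hva]; rfl
    have hm' : x' (2*i+1-1) = 2 := by
      rw [show (2*i+1-1 : ℤ) = 2*i by ring, (hv i).1, hva]; rfl
    have key := (keyF4sym x' hd' (2*i+1) h0 hm').mp (hC' (2*i+1))
    have hB : Lse x' (2*i+1-1) = chiInf (fun q : ℕ => v (i-1-q)) := by
      rw [show (2*i+1-1 : ℤ) = 2*i by ring, Lse_chi x' v hv i]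
    have hA : Rse x' (2*i+1+1) = chiInf (fun q : ℕ => v (i+1+q)) := by
      rw [show (2*i+1+1 : ℤ) = 2*(i+1) by ring, Rse_chi x' v hv (i+1)]
    have hsplit : chiInf (fun q : ℕ => v (i+1+q)) =
        sc 1 (sc 1 (chiInf (fun q : ℕ => v (i+2+q)))) := by
      rw [chiInf_split]
      have h9 : v (i+1+(0:ℕ)) = AB.b := by simpa using hvb
      rw [h9]
      have : (fun q : ℕ => v (i+1+(q+1:ℕ))) = (fun q : ℕ => v (i+2+q)) := by
        funext q; congr 1; push_cast; ring
      rw [this]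
      rfl
    rw [hB, hA, hsplit, altLe_sc2, altLe_chiInf_iff] at key
    exact key

theorem statement_3 (x : ℤ → ℕ) (hx : ∀ i, 0 < x i) :
    mVal x ≤ 3 ↔
      ∃ (v : ℤ → AB) (k : ℤ),
        (∀ i : ℤ, x (2 * i + k) = chiVal (v i) ∧ x (2 * i + 1 + k) = chiVal (v i)) ∧
        (∀ i : ℤ,
          (v i = AB.b ∧ v (i + 1) = AB.a →
            lexLe (fun j : ℕ => v (i - 1 - (j : ℤ))) (fun j : ℕ => v (i + 2 + (j : ℤ)))) ∧
          (v i = AB.a ∧ v (i + 1) = AB.b →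
            lexLe (fun j : ℕ => v (i + 2 + (j : ℤ))) (fun j : ℕ => v (i - 1 - (j : ℤ))))) := by
  constructor
  · intro hm
    exact forward_dir x hx hm
  · rintro ⟨v, k, h1, h2⟩
    rw [← mVal_shift x k, mVal_le_three_iff]
    intro n
    refine backward_lam (shiftZ x k) v ?_ h2 n
    intro i
    exact ⟨(h1 i).1, (h1 i).2⟩
end

section
/- Let x̄ be a bi-infinite sequence of positive integers with m(x̄) = 3 and let w = π(x̄). Then for every even position i ≥ 2, the cut of w at position i has value strictly less than 3; in particular all such cuts are good. -/
/-- Value of the cut of the one-sided word `w` at position `i`: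
[wᵢ; wᵢ₊₁, …] + [0; wᵢ₋₁, …, w₀] (the second summand is 0 when i = 0). -/
noncomputable def cutVal (w : ℕ → ℕ) (i : ℕ) : ℝ :=
  cfVal (fun k : ℕ => w (i + k)) + (cfFin (((List.range i).map w).reverse))⁻¹

/-! ### Auxiliary machinery -/

/-- `cfL L z` is the value of the continued fraction `[c₀; c₁, …, cₙ₋₁, "z"]`
where the last "entry" is a real number `z` (and `cfL [] z = z`). -/
noncomputable def cfL : List ℕ → ℝ → ℝ
  | [], z => z
  | c :: l, z => (c : ℝ) + (cfL l z)⁻¹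

lemma cfFin_append_s5 (P Q : List ℕ) : cfFin (P ++ Q) = cfL P (cfFin Q) := by
  induction P with
  | nil => rfl
  | cons c l ih => simp [cfFin, cfL, ih]

lemma cfL_one_le (L : List ℕ) (hL : ∀ c ∈ L, 1 ≤ c) {z : ℝ} (hz : 1 ≤ z) :
    1 ≤ cfL L z := by
  induction L with
  | nil => exact hz
  | cons c l ih =>
    have hc : (1 : ℝ) ≤ c := by exact_mod_cast hL c List.mem_cons_self
    have h1 : 1 ≤ cfL l z := ih (fun d hd => hL d (List.mem_cons_of_mem _ hd))
    have h2 : 0 ≤ (cfL l z)⁻¹ := inv_nonneg.2 (by linarith)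
    show 1 ≤ (c : ℝ) + (cfL l z)⁻¹
    linarith

lemma cfL_mono (L : List ℕ) (hL : ∀ c ∈ L, 1 ≤ c) {z w : ℝ} (hz : 1 ≤ z) (hzw : z < w) :
    (Even L.length → cfL L z < cfL L w) ∧ (Odd L.length → cfL L w < cfL L z) := by
  induction L with
  | nil =>
    refine ⟨fun _ => hzw, fun h => absurd h (by simp)⟩
  | cons c l ih =>
    have hl : ∀ d ∈ l, 1 ≤ d := fun d hd => hL d (List.mem_cons_of_mem _ hd)
    obtain ⟨ihe, iho⟩ := ih hl
    have h1z : 1 ≤ cfL l z := cfL_one_le l hl hz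
    have h1w : 1 ≤ cfL l w := cfL_one_le l hl (by linarith)
    constructor
    · intro h
      have hodd : Odd l.length := by
        rw [List.length_cons, Nat.even_add_one] at h
        exact Nat.not_even_iff_odd.mp h
      have := iho hodd
      show (c : ℝ) + (cfL l z)⁻¹ < (c : ℝ) + (cfL l w)⁻¹
      have : (cfL l z)⁻¹ < (cfL l w)⁻¹ := by
        apply inv_strictAnti₀ <;> linarith
      linarith
    · intro h
      have heven : Even l.length := by
        rw [List.length_cons, Nat.odd_add_one] at h
        exact Nat.not_odd_iff_even.mp h
      have := ihe heven
      show (c : ℝ) + (cfL l w)⁻¹ < (c : ℝ) + (cfL l z)⁻¹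
      have : (cfL l w)⁻¹ < (cfL l z)⁻¹ := by
        apply inv_strictAnti₀ <;> linarith
      linarith

lemma cfL_lip : ∀ (n : ℕ) (L : List ℕ), L.length ≤ n → (∀ c ∈ L, 1 ≤ c) →
    ∀ z w : ℝ, 1 ≤ z → 1 ≤ w →
    |cfL L z - cfL L w| ≤ (2⁻¹ : ℝ) ^ (L.length / 2) * |z - w| := by
  intro n
  induction n with
  | zero =>
    intro L hlen _ z w _ _
    have : L = [] := List.length_eq_zero_iff.mp (Nat.le_zero.mp hlen)
    subst this
    simp [cfL]
  | succ n ih =>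
    intro L hlen hL z w hz hw
    match L with
    | [] => simp [cfL]
    | [c] =>
      have hz0 : (0 : ℝ) < z := by linarith
      have hw0 : (0 : ℝ) < w := by linarith
      have key : cfL [c] z - cfL [c] w = (w - z) / (z * w) := by
        show ((c : ℝ) + z⁻¹) - ((c : ℝ) + w⁻¹) = (w - z) / (z * w)
        field_simp
        ring
      rw [key, abs_div, abs_of_pos (by positivity : (0:ℝ) < z * w)]
      have h1 : |w - z| / (z * w) ≤ |w - z| :=
        div_le_self (abs_nonneg _) (one_le_mul_of_one_le_of_one_le hz hw)
      simpa [abs_sub_comm] using h1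
    | a :: b :: L' =>
      have hL' : ∀ c ∈ L', 1 ≤ c := fun c hc => hL c (by simp [hc])
      have hb : (1 : ℝ) ≤ b := by exact_mod_cast hL b (by simp)
      set u := cfL L' z with hu
      set v := cfL L' w with hv
      have h1u : 1 ≤ u := cfL_one_le L' hL' hz
      have h1v : 1 ≤ v := cfL_one_le L' hL' hw
      have hbu : (1 : ℝ) ≤ b * u := one_le_mul_of_one_le_of_one_le hb h1u
      have hbv : (1 : ℝ) ≤ b * v := one_le_mul_of_one_le_of_one_le hb h1v
      have hu0 : u ≠ 0 := by linarith
      have hv0 : v ≠ 0 := by linarith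
      have hbu0 : ((b:ℝ) + u⁻¹) ≠ 0 := by
        have : (0:ℝ) < u⁻¹ := by positivity
        linarith
      have hbv0 : ((b:ℝ) + v⁻¹) ≠ 0 := by
        have : (0:ℝ) < v⁻¹ := by positivity
        linarith
      have key : cfL (a :: b :: L') z - cfL (a :: b :: L') w
          = (u - v) / ((b * u + 1) * (b * v + 1)) := by
        show ((a:ℝ) + ((b:ℝ) + u⁻¹)⁻¹) - ((a:ℝ) + ((b:ℝ) + v⁻¹)⁻¹) = _
        field_simp
        ring
      have hden : (4 : ℝ) ≤ (b * u + 1) * (b * v + 1) := by nlinarith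
      have hstep : |cfL (a :: b :: L') z - cfL (a :: b :: L') w| ≤ |u - v| / 4 := by
        rw [key, abs_div, abs_of_pos (by linarith : (0:ℝ) < (b*u+1)*(b*v+1))]
        apply div_le_div_of_nonneg_left (abs_nonneg _) (by norm_num) hden
      have hih : |u - v| ≤ (2⁻¹ : ℝ) ^ (L'.length / 2) * |z - w| :=
        ih L' (by simp at hlen ⊢; omega) hL' z w hz hw
      have hexp : (a :: b :: L').length / 2 = L'.length / 2 + 1 := by
        simp [List.length_cons]; omega
      rw [hexp, pow_succ]
      have habs : (0:ℝ) ≤ |z - w| := abs_nonneg _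
      calc |cfL (a :: b :: L') z - cfL (a :: b :: L') w| ≤ |u - v| / 4 := hstep
        _ ≤ ((2⁻¹ : ℝ) ^ (L'.length / 2) * |z - w|) / 4 := by
            apply div_le_div_of_nonneg_right hih; norm_num
        _ ≤ (2⁻¹ : ℝ) ^ (L'.length / 2) * 2⁻¹ * |z - w| := by
            have : (0:ℝ) ≤ (2⁻¹ : ℝ) ^ (L'.length / 2) := by positivity
            nlinarith

/-- Truncation: value of `[a 0; a 1, …, a n]`. -/
noncomputable def cfT (a : ℕ → ℕ) (n : ℕ) : ℝ := cfFin ((List.range (n + 1)).map a)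

lemma cfT_split (a : ℕ → ℕ) {n m : ℕ} (h : n ≤ m) :
    cfT a m = cfL ((List.range n).map a)
      (cfFin ((List.range (m + 1 - n)).map (fun j => a (n + j)))) := by
  have hmn : m + 1 = n + (m + 1 - n) := by omega
  conv_lhs => rw [cfT, hmn]
  rw [List.range_add, List.map_append, cfFin_append_s5, List.map_map]
  rfl

lemma cfFin_nonneg (L : List ℕ) : 0 ≤ cfFin L := by
  induction L with
  | nil => simp [cfFin]
  | cons c l ih =>
    have : 0 ≤ (cfFin l)⁻¹ := inv_nonneg.2 ih
    show 0 ≤ (c : ℝ) + (cfFin l)⁻¹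
    positivity

lemma cfFin_cons_bounds (c : ℕ) (l : List ℕ) (hl : ∀ d ∈ l, 1 ≤ d) :
    (c : ℝ) ≤ cfFin (c :: l) ∧ cfFin (c :: l) ≤ (c : ℝ) + 1 := by
  have h1 : 0 ≤ (cfFin l)⁻¹ := inv_nonneg.2 (cfFin_nonneg l)
  have h2 : (cfFin l)⁻¹ ≤ 1 := by
    match l with
    | [] => simp [cfFin]
    | d :: l' =>
      have hd : (1:ℝ) ≤ d := by exact_mod_cast hl d (by simp)
      have := (cfFin_cons_bounds d l' (fun e he => hl e (by simp [he]))).1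
      have h1' : (1:ℝ) ≤ cfFin (d :: l') := by linarith
      exact inv_le_one_of_one_le₀ h1'
  constructor <;> show _ ≤ _ <;>
    [skip; skip] <;> simp only [cfFin] <;> linarith

lemma one_le_cfFin_cons (c : ℕ) (l : List ℕ) (hc : 1 ≤ c) (hl : ∀ d ∈ l, 1 ≤ d) :
    (1 : ℝ) ≤ cfFin (c :: l) := by
  have := (cfFin_cons_bounds c l hl).1
  have : (1:ℝ) ≤ (c:ℝ) := by exact_mod_cast hc
  linarith [(cfFin_cons_bounds c l hl).1]

lemma range_map_cons (f : ℕ → ℕ) (t : ℕ) :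
    (List.range (t + 1)).map f = f 0 :: (List.range t).map (fun j => f (j + 1)) := by
  rw [List.range_succ_eq_map, List.map_cons, List.map_map]
  rfl

lemma cfT_dist (a : ℕ → ℕ) (ha : ∀ n, 1 ≤ a n) {n m : ℕ} (h : n ≤ m) :
    |cfT a m - cfT a n| ≤ (2⁻¹ : ℝ) ^ (n / 2) := by
  have hsplit_m := cfT_split a h
  have hsplit_n := cfT_split a (le_refl n)
  set P := (List.range n).map a with hP
  have hPlen : P.length = n := by simp [hP]
  have hPmem : ∀ c ∈ P, 1 ≤ c := by
    intro c hc
    simp [hP] at hc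
    obtain ⟨j, _, hj⟩ := hc
    exact hj ▸ ha j
  -- tails
  have hz : ∀ t : ℕ, (a n : ℝ) ≤ cfFin ((List.range (t + 1)).map (fun j => a (n + j))) ∧
      cfFin ((List.range (t + 1)).map (fun j => a (n + j))) ≤ (a n : ℝ) + 1 := by
    intro t
    rw [range_map_cons]
    have := cfFin_cons_bounds (a (n + 0)) ((List.range t).map (fun j => a (n + (j + 1))))
      (by intro d hd; simp at hd; obtain ⟨j, _, hj⟩ := hd; exact hj ▸ ha _)
    simpa using this
  obtain ⟨t, ht⟩ : ∃ t, m + 1 - n = t + 1 := ⟨m - n, by omega⟩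
  have hn1 : n + 1 - n = 0 + 1 := by omega
  rw [hsplit_m, hsplit_n, ht, hn1]
  set z := cfFin ((List.range (t + 1)).map (fun j => a (n + j))) with hzdef
  set w := cfFin ((List.range (0 + 1)).map (fun j => a (n + j))) with hwdef
  have hzb := hz t
  have hwb := hz 0
  have h1 : (1:ℝ) ≤ a n := by exact_mod_cast ha n
  have hzw : |z - w| ≤ 1 := by
    rw [abs_le]; constructor <;> linarith [hzb.1, hzb.2, hwb.1, hwb.2]
  have := cfL_lip P.length P (le_refl _) hPmem z w (by linarith [hzb.1]) (by linarith [hwb.1])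
  rw [hPlen] at this
  calc |cfL P z - cfL P w| ≤ (2⁻¹ : ℝ) ^ (n / 2) * |z - w| := this
    _ ≤ (2⁻¹ : ℝ) ^ (n / 2) * 1 := by
        apply mul_le_mul_of_nonneg_left hzw; positivity
    _ = (2⁻¹ : ℝ) ^ (n / 2) := mul_one _

lemma cfT_tendsto (a : ℕ → ℕ) (ha : ∀ n, 1 ≤ a n) :
    Filter.Tendsto (cfT a) Filter.atTop (nhds (cfVal a)) := by
  have hc : CauchySeq (cfT a) := by
    apply cauchySeq_of_le_tendsto_0 (b := fun N => (2⁻¹ : ℝ) ^ (N / 2))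
    · intro p q N hp hq
      rcases le_total p q with hpq | hpq
      · rw [dist_comm, Real.dist_eq]
        calc |cfT a q - cfT a p| ≤ (2⁻¹ : ℝ) ^ (p / 2) := cfT_dist a ha hpq
          _ ≤ (2⁻¹ : ℝ) ^ (N / 2) := by
              apply pow_le_pow_of_le_one (by norm_num) (by norm_num); omega
      · rw [Real.dist_eq]
        calc |cfT a p - cfT a q| ≤ (2⁻¹ : ℝ) ^ (q / 2) := cfT_dist a ha hpq
          _ ≤ (2⁻¹ : ℝ) ^ (N / 2) := by
              apply pow_le_pow_of_le_one (by norm_num) (by norm_num); omega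
    · have h2 : Filter.Tendsto (fun k : ℕ => (2⁻¹ : ℝ) ^ k) Filter.atTop (nhds 0) :=
        tendsto_pow_atTop_nhds_zero_of_lt_one (by norm_num) (by norm_num)
      have hdiv : Filter.Tendsto (fun N : ℕ => N / 2) Filter.atTop Filter.atTop := by
        apply Filter.tendsto_atTop_atTop.2
        intro b; exact ⟨2 * b, fun c hc => by omega⟩
      exact h2.comp hdiv
  obtain ⟨L, hL⟩ := cauchySeq_tendsto_of_complete hc
  have : cfVal a = L := hL.limUnder_eq
  rwa [this]

lemma one_le_cfT (a : ℕ → ℕ) (ha : ∀ n, 1 ≤ a n) (n : ℕ) : (1 : ℝ) ≤ cfT a n := by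
  rw [cfT, range_map_cons]
  exact one_le_cfFin_cons _ _ (ha 0)
    (by intro d hd; simp at hd; obtain ⟨j, _, hj⟩ := hd; exact hj ▸ ha _)

lemma one_le_cfVal (a : ℕ → ℕ) (ha : ∀ n, 1 ≤ a n) : (1 : ℝ) ≤ cfVal a :=
  ge_of_tendsto' (cfT_tendsto a ha) (one_le_cfT a ha)

lemma cfVal_lt_cfT_odd (a : ℕ → ℕ) (ha : ∀ n, 1 ≤ a n) {k : ℕ} (hk : Odd k) :
    cfVal a < cfT a k := by
  set P := (List.range k).map a with hP
  have hPlen : Odd P.length := by simpa [hP] using hk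
  have hPmem : ∀ c ∈ P, 1 ≤ c := by
    intro c hc; simp [hP] at hc; obtain ⟨j, _, hj⟩ := hc; exact hj ▸ ha j
  set c₀ : ℝ := (a k : ℝ) + ((a (k + 1) : ℝ) + 1)⁻¹ with hc₀
  have hak1 : (1:ℝ) ≤ a k := by exact_mod_cast ha k
  have hak11 : (1:ℝ) ≤ a (k+1) := by exact_mod_cast ha (k+1)
  have hc₀gt : (a k : ℝ) < c₀ := by
    have : (0:ℝ) < ((a (k + 1) : ℝ) + 1)⁻¹ := by positivity
    rw [hc₀]; linarith
  have h1c₀ : (1:ℝ) ≤ c₀ := by linarith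
  have hTk : cfT a k = cfL P (a k) := by
    rw [cfT_split a (le_refl k)]
    congr 1
    have : k + 1 - k = 1 := by omega
    rw [this]
    simp [cfFin]
  have hm : ∀ m, k + 1 ≤ m → cfT a m ≤ cfL P c₀ := by
    intro m hmk
    rw [cfT_split a (by omega : k ≤ m)]
    obtain ⟨t, ht⟩ : ∃ t, m + 1 - k = t + 1 + 1 := ⟨m - k - 1, by omega⟩
    rw [ht]
    set f : ℕ → ℕ := fun j => a (k + j) with hf
    have hfe : (List.range (t + 1 + 1)).map f
        = f 0 :: (f 1 :: (List.range t).map (fun j => f (j + 1 + 1))) := by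
      rw [range_map_cons]
      congr 1
      rw [range_map_cons]
    rw [hfe]
    have hinner : (1:ℝ) ≤ cfFin (f 1 :: (List.range t).map (fun j => f (j + 1 + 1))) ∧
        cfFin (f 1 :: (List.range t).map (fun j => f (j + 1 + 1))) ≤ (f 1 : ℝ) + 1 := by
      constructor
      · exact one_le_cfFin_cons _ _ (ha _)
          (by intro d hd; simp at hd; obtain ⟨j, _, hj⟩ := hd; exact hj ▸ ha _)
      · exact (cfFin_cons_bounds _ _
          (by intro d hd; simp at hd; obtain ⟨j, _, hj⟩ := hd; exact hj ▸ ha _)).2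
    have hf1 : f 1 = a (k + 1) := rfl
    set z := cfFin (f 0 :: (f 1 :: (List.range t).map (fun j => f (j + 1 + 1)))) with hzdef
    have hzge : c₀ ≤ z := by
      have : z = (f 0 : ℝ) + (cfFin (f 1 :: (List.range t).map (fun j => f (j + 1 + 1))))⁻¹ := rfl
      rw [this]
      have hf0 : f 0 = a k := by simp [hf]
      rw [hf0, hc₀]
      gcongr
      · linarith [hinner.1]
      · rw [← hf1]; exact hinner.2
    rcases eq_or_lt_of_le hzge with heq | hlt
    · rw [← heq]
    · exact le_of_lt ((cfL_mono P hPmem h1c₀ hlt).2 hPlen)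
  have hle : cfVal a ≤ cfL P c₀ :=
    le_of_tendsto (cfT_tendsto a ha) (Filter.eventually_atTop.2 ⟨k + 1, hm⟩)
  have hlt : cfL P c₀ < cfL P (a k) :=
    (cfL_mono P hPmem hak1 hc₀gt).2 hPlen
  rw [hTk]; linarith

lemma rev_map_range (w : ℕ → ℕ) (i : ℕ) :
    ((List.range i).map w).reverse = (List.range i).map (fun j => w (i - 1 - j)) := by
  apply List.ext_getElem
  · simp
  · intro k h1 h2
    simp only [List.getElem_reverse, List.getElem_map, List.getElem_range,
      List.length_map, List.length_range] at *
theorem statement_5 (x : ℤ → ℕ) (hx : ∀ i, 0 < x i) (hm : mVal x = 3) :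
    ∀ i : ℕ, 2 ≤ i → Even i → cutVal (fun n : ℕ => x (n : ℤ)) i < 3 := by
  intro i hi hieven
  set w : ℕ → ℕ := fun n : ℕ => x (n : ℤ) with hw
  set b : ℕ → ℕ := fun n : ℕ => x ((i : ℤ) - 1 - (n : ℤ)) with hb
  have hbpos : ∀ n, 1 ≤ b n := fun n => hx _
  -- the forward parts agree
  have e1 : (fun k : ℕ => w (i + k)) = (fun n : ℕ => shiftZ x (i : ℤ) (n : ℤ)) := by
    funext k
    simp only [hw, shiftZ]
    congr 1
    push_cast
    ring
  -- the backward part of lamZ is cfVal b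
  have e2 : (fun n : ℕ => shiftZ x (i : ℤ) (-1 - (n : ℤ))) = b := by
    funext n
    simp only [hb, shiftZ]
    congr 1
    ring
  -- lamZ value
  have hlam : lamZ (shiftZ x (i : ℤ)) = cfVal (fun k : ℕ => w (i + k)) + (cfVal b)⁻¹ := by
    rw [lamZ, e1, e2]
  -- lamZ ≤ 3 from the Markov value
  have h3 : lamZ (shiftZ x (i : ℤ)) ≤ 3 := by
    have hsup : (lamZ (shiftZ x (i : ℤ)) : EReal) ≤ mVal x :=
      le_iSup (fun k : ℤ => (lamZ (shiftZ x k) : EReal)) (i : ℤ)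
    rw [hm, show (3 : EReal) = ((3 : ℝ) : EReal) by norm_cast] at hsup
    exact EReal.coe_le_coe_iff.mp hsup
  -- the finite backward continued fraction
  have hrev : ((List.range i).map w).reverse = (List.range i).map b := by
    rw [rev_map_range]
    apply List.map_congr_left
    intro j hj
    simp only [List.mem_range] at hj
    simp only [hw, hb]
    congr 1
    omega
  have hi1 : i - 1 + 1 = i := by omega
  have hfin : cfFin (((List.range i).map w).reverse) = cfT b (i - 1) := by
    rw [hrev, cfT, hi1]
  have hodd : Odd (i - 1) := by
    rcases hieven with ⟨t, ht⟩
    exact ⟨t - 1, by omega⟩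
  have h5 : cfVal b < cfT b (i - 1) := cfVal_lt_cfT_odd b hbpos hodd
  have h6 : (1 : ℝ) ≤ cfVal b := one_le_cfVal b hbpos
  have h7 : (cfT b (i - 1))⁻¹ < (cfVal b)⁻¹ :=
    inv_strictAnti₀ (by linarith) h5
  calc cutVal w i = cfVal (fun k : ℕ => w (i + k)) + (cfT b (i - 1))⁻¹ := by
        rw [cutVal, hfin]
    _ < cfVal (fun k : ℕ => w (i + k)) + (cfVal b)⁻¹ := by linarith
    _ = lamZ (shiftZ x (i : ℤ)) := hlam.symm
    _ ≤ 3 := h3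
end

section
/- For every pair (α, β) ∈ P̄: α begins with the letter a and β ends with the letter b; moreover αβ = β_a α^b, α^b β = β^T α^b, and α β_a = β_a α^T. Consequently, for every k ≥ 1 the words α^k β and α β^k begin with β_a and end with α^b. -/
/-- P̄ₙ: pairs of words obtained from (a, b) by exactly n applications of the
operations Ū(α, β) = (αβ, β) and V̄(α, β) = (α, αβ). -/
inductive PbarN : ℕ → List AB → List AB → Prop
  | base : PbarN 0 [AB.a] [AB.b]
  | u {n : ℕ} {α β : List AB} : PbarN n α β → PbarN (n + 1) (α ++ β) β
  | v {n : ℕ} {α β : List AB} : PbarN n α β → PbarN (n + 1) α (α ++ β)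

/-- β_a : the word β with its last letter replaced by a. -/
def subA (β : List AB) : List AB := β.dropLast ++ [AB.a]

/-- α^b : the word α with its first letter replaced by b. -/
def supB (α : List AB) : List AB := AB.b :: α.tail

/-- The k-fold concatenation wᵏ. -/
def npow (w : List AB) (k : ℕ) : List AB := (List.replicate k w).flatten

lemma supB_append (α β : List AB) (h : α ≠ []) : supB (α ++ β) = supB α ++ β := by
  cases α with
  | nil => exact absurd rfl h
  | cons x t => simp [supB]

lemma subA_append (α β : List AB) (h : β ≠ []) : subA (α ++ β) = α ++ subA β := by
  simp [subA, List.dropLast_append_of_ne_nil h]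

lemma npow_succ (w : List AB) (k : ℕ) : npow w (k+1) = w ++ npow w k := by
  simp [npow, List.replicate_succ]

lemma npow_succ' (w : List AB) (k : ℕ) : npow w (k+1) = npow w k ++ w := by
  simp [npow, List.replicate_succ']

lemma key {n : ℕ} {α β : List AB} (h : PbarN n α β) :
    ([AB.a] <+: α) ∧ ([AB.b] <:+ β) ∧
    α ++ β = subA β ++ supB α ∧
    supB α ++ β = β.reverse ++ supB α ∧
    α ++ subA β = subA β ++ α.reverse ∧
    supB α ++ subA β = β.reverse ++ α.reverse := by
  induction h with
  | base =>
      refine ⟨⟨[], rfl⟩, ⟨[], rfl⟩, ?_, ?_, ?_, ?_⟩ <;> rfl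
  | @u n α β h ih =>
      obtain ⟨ha, hb, e1, e2, e3, e4⟩ := ih
      have αne : α ≠ [] := by rintro rfl; simp at ha
      have sA := supB_append α β αne
      refine ⟨ha.trans (List.prefix_append _ _), hb, ?_, ?_, ?_, ?_⟩
      · calc α ++ β ++ β = (subA β ++ supB α) ++ β := by rw [e1]
          _ = subA β ++ (supB α ++ β) := by rw [List.append_assoc]
          _ = subA β ++ supB (α ++ β) := by rw [sA]
      · calc supB (α ++ β) ++ β = (supB α ++ β) ++ β := by rw [sA]
          _ = (β.reverse ++ supB α) ++ β := by rw [e2]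
          _ = β.reverse ++ (supB α ++ β) := by rw [List.append_assoc]
          _ = β.reverse ++ supB (α ++ β) := by rw [sA]
      · calc α ++ β ++ subA β = (subA β ++ supB α) ++ subA β := by rw [e1]
          _ = subA β ++ (supB α ++ subA β) := by rw [List.append_assoc]
          _ = subA β ++ (β.reverse ++ α.reverse) := by rw [e4]
          _ = subA β ++ (α ++ β).reverse := by rw [List.reverse_append]
      · calc supB (α ++ β) ++ subA β = (supB α ++ β) ++ subA β := by rw [sA]
          _ = (β.reverse ++ supB α) ++ subA β := by rw [e2]
          _ = β.reverse ++ (supB α ++ subA β) := by rw [List.append_assoc]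
          _ = β.reverse ++ (β.reverse ++ α.reverse) := by rw [e4]
          _ = β.reverse ++ (α ++ β).reverse := by rw [List.reverse_append]
  | @v n α β h ih =>
      obtain ⟨ha, hb, e1, e2, e3, e4⟩ := ih
      have βne : β ≠ [] := by rintro rfl; simp at hb
      have sB := subA_append α β βne
      refine ⟨ha, hb.trans (List.suffix_append _ _), ?_, ?_, ?_, ?_⟩
      · calc α ++ (α ++ β) = α ++ (subA β ++ supB α) := by rw [e1]
          _ = (α ++ subA β) ++ supB α := by rw [List.append_assoc]
          _ = subA (α ++ β) ++ supB α := by rw [sB]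
      · calc supB α ++ (α ++ β) = supB α ++ (subA β ++ supB α) := by rw [e1]
          _ = (supB α ++ subA β) ++ supB α := by rw [List.append_assoc]
          _ = (β.reverse ++ α.reverse) ++ supB α := by rw [e4]
          _ = (α ++ β).reverse ++ supB α := by rw [List.reverse_append]
      · calc α ++ subA (α ++ β) = α ++ (α ++ subA β) := by rw [sB]
          _ = α ++ (subA β ++ α.reverse) := by rw [e3]
          _ = (α ++ subA β) ++ α.reverse := by rw [List.append_assoc]
          _ = subA (α ++ β) ++ α.reverse := by rw [sB]
      · calc supB α ++ subA (α ++ β) = supB α ++ (α ++ subA β) := by rw [sB]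
          _ = supB α ++ (subA β ++ α.reverse) := by rw [e3]
          _ = (supB α ++ subA β) ++ α.reverse := by rw [List.append_assoc]
          _ = (β.reverse ++ α.reverse) ++ α.reverse := by rw [e4]
          _ = (α ++ β).reverse ++ α.reverse := by rw [List.reverse_append]

theorem statement_8 (α β : List AB) (h : ∃ n : ℕ, PbarN n α β) :
    ([AB.a] <+: α) ∧ ([AB.b] <:+ β) ∧
    α ++ β = subA β ++ supB α ∧
    supB α ++ β = β.reverse ++ supB α ∧
    α ++ subA β = subA β ++ α.reverse ∧
    (∀ k : ℕ, 1 ≤ k →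
      (subA β <+: npow α k ++ β) ∧ (supB α <:+ npow α k ++ β) ∧
      (subA β <+: α ++ npow β k) ∧ (supB α <:+ α ++ npow β k)) := by
  obtain ⟨n, h⟩ := h
  obtain ⟨ha, hb, e1, e2, e3, e4⟩ := key h
  refine ⟨ha, hb, e1, e2, e3, ?_⟩
  have P1 : ∀ j : ℕ, subA β <+: npow α (j+1) ++ β := by
    intro j
    induction j with
    | zero =>
        refine ⟨supB α, ?_⟩
        simp [npow_succ, npow, ← e1]
    | succ j ih =>
        obtain ⟨t, ht⟩ := ih
        refine ⟨α.reverse ++ t, ?_⟩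
        calc subA β ++ (α.reverse ++ t) = (subA β ++ α.reverse) ++ t := by
              rw [List.append_assoc]
          _ = (α ++ subA β) ++ t := by rw [e3]
          _ = α ++ (subA β ++ t) := by rw [List.append_assoc]
          _ = α ++ (npow α (j+1) ++ β) := by rw [ht]
          _ = (α ++ npow α (j+1)) ++ β := by rw [List.append_assoc]
          _ = npow α (j+1+1) ++ β := by rw [← npow_succ]
  have S2 : ∀ j : ℕ, supB α <:+ α ++ npow β (j+1) := by
    intro j
    induction j with
    | zero =>
        refine ⟨subA β, ?_⟩
        simp [npow_succ, npow, ← e1]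
    | succ j ih =>
        obtain ⟨t, ht⟩ := ih
        refine ⟨t ++ β.reverse, ?_⟩
        calc (t ++ β.reverse) ++ supB α = t ++ (β.reverse ++ supB α) := by
              rw [List.append_assoc]
          _ = t ++ (supB α ++ β) := by rw [e2]
          _ = (t ++ supB α) ++ β := by rw [List.append_assoc]
          _ = (α ++ npow β (j+1)) ++ β := by rw [ht]
          _ = α ++ (npow β (j+1) ++ β) := by rw [List.append_assoc]
          _ = α ++ npow β (j+1+1) := by rw [← npow_succ']
  intro k hk
  obtain ⟨j, rfl⟩ : ∃ j, k = j + 1 := ⟨k - 1, (Nat.succ_pred_eq_of_pos hk).symm⟩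
  refine ⟨P1 j, ?_, ?_, S2 j⟩
  · refine ⟨npow α j ++ subA β, ?_⟩
    calc (npow α j ++ subA β) ++ supB α = npow α j ++ (subA β ++ supB α) := by
          rw [List.append_assoc]
      _ = npow α j ++ (α ++ β) := by rw [← e1]
      _ = (npow α j ++ α) ++ β := by rw [List.append_assoc]
      _ = npow α (j+1) ++ β := by rw [← npow_succ']
  · refine ⟨supB α ++ npow β j, ?_⟩
    calc subA β ++ (supB α ++ npow β j) = (subA β ++ supB α) ++ npow β j := by
          rw [List.append_assoc]
      _ = (α ++ β) ++ npow β j := by rw [← e1]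
      _ = α ++ (β ++ npow β j) := by rw [List.append_assoc]
      _ = α ++ npow β (j+1) := by rw [← npow_succ]
end

section
/- Let (α, β) ∈ P̄. If a finite word over {a, b} admits two factorizations γ₁γ₂⋯γₙ = η₁η₂⋯η_m with every γ_i, η_j ∈ {α, β}, then n = m and γ_i = η_i for all 1 ≤ i ≤ n. Likewise, if two infinite concatenations γ₁γ₂⋯ and η₁η₂⋯ with every γ_i, η_j ∈ {α, β} are equal as one-sided infinite words, then γ_i = η_i for all i. -/
/-- The one-sided infinite word γ₁γ₂⋯ obtained by concatenating the (nonempty)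
blocks c 0, c 1, c 2, …. -/
def infConcat (c : ℕ → List AB) : ℕ → AB :=
  fun i => ((List.range (i + 1)).flatMap c).getD i AB.a

deriving instance DecidableEq for AB

namespace StatementNine

/-! ### Generic machinery for limits of concatenations of blocks -/

variable {X : Type}

/-- Concatenation of the first `n` blocks. -/
def pre (c : ℕ → List X) (n : ℕ) : List X := (List.range n).flatMap c

/-- The limit word of an infinite sequence of blocks. -/
def lim (x : X) (c : ℕ → List X) (i : ℕ) : X := (pre c (i + 1)).getD i x

lemma infConcat_eq_lim (c : ℕ → List AB) : infConcat c = lim AB.a c := rfl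

lemma pre_succ (c : ℕ → List X) (n : ℕ) : pre c (n + 1) = pre c n ++ c n := by
  simp [pre, List.range_succ]

lemma pre_prefix (c : ℕ → List X) {n m : ℕ} (h : n ≤ m) : pre c n <+: pre c m := by
  induction m with
  | zero => interval_cases n; exact List.prefix_rfl
  | succ m ih =>
    rcases Nat.eq_or_lt_of_le h with rfl | h'
    · exact List.prefix_rfl
    · rw [pre_succ]
      exact (ih (Nat.lt_succ_iff.mp h')).trans (List.prefix_append _ _)

lemma le_length_pre (c : ℕ → List X) (hc : ∀ i, c i ≠ []) : ∀ n, n ≤ (pre c n).length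
  | 0 => by simp [pre]
  | n + 1 => by
    rw [pre_succ, List.length_append]
    have h1 := le_length_pre c hc n
    have h2 : 0 < (c n).length := List.length_pos_iff.mpr (hc n)
    omega

lemma getD_of_prefix {l m : List X} (h : l <+: m) {i : ℕ} (hi : i < l.length) (x : X) :
    l.getD i x = m.getD i x := by
  obtain ⟨t, rfl⟩ := h
  exact (List.getD_append _ _ _ _ hi).symm

lemma lim_eq (x : X) {c : ℕ → List X} (hc : ∀ i, c i ≠ []) {i n : ℕ}
    (h : i < (pre c n).length) : lim x c i = (pre c n).getD i x := by
  have h1 : i < (pre c (i + 1)).length :=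
    lt_of_lt_of_le (Nat.lt_succ_self i) (le_length_pre c hc (i + 1))
  rcases le_total (i + 1) n with hn | hn
  · exact getD_of_prefix (pre_prefix c hn) h1 x
  · exact (getD_of_prefix (pre_prefix c hn) h x).symm

lemma mem_pre {c : ℕ → List X} {n : ℕ} {y : X} (h : y ∈ pre c n) : ∃ j, y ∈ c j := by
  simp only [pre, List.mem_flatMap, List.mem_range] at h
  obtain ⟨j, _, hj⟩ := h
  exact ⟨j, hj⟩

lemma lim_mem (x : X) {c : ℕ → List X} (hc : ∀ i, c i ≠ []) (i : ℕ) :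
    ∃ j, lim x c i ∈ c j := by
  have h : i < (pre c (i + 1)).length :=
    lt_of_lt_of_le (Nat.lt_succ_self i) (le_length_pre c hc (i + 1))
  rw [lim, List.getD_eq_getElem _ _ h]
  exact mem_pre (List.getElem_mem _)

lemma pre_congr {c d : ℕ → List X} {n : ℕ} (h : ∀ j, j < n → c j = d j) :
    pre c n = pre d n := by
  induction n with
  | zero => rfl
  | succ n ih =>
    rw [pre_succ, pre_succ, ih (fun j hj => h j (Nat.lt_succ_of_lt hj)),
      h n (Nat.lt_succ_self n)]

/-! ### Expansions -/

/-- Value of the expanded limit sequence inside the `n`-th block. -/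
lemma ex_block (f : List AB → List (List AB)) (c : ℕ → List AB)
    (hnil : ∀ i, f (c i) ≠ []) {n k : ℕ} (hk : k < (f (c n)).length) :
    lim [] (fun j => f (c j)) ((pre (fun j => f (c j)) n).length + k) = (f (c n)).getD k [] := by
  have hl : pre (fun j => f (c j)) (n + 1) = pre (fun j => f (c j)) n ++ f (c n) :=
    pre_succ _ n
  have hlen : (pre (fun j => f (c j)) n).length + k < (pre (fun j => f (c j)) (n + 1)).length := by
    rw [hl, List.length_append]; omega
  rw [lim_eq ([] : List AB) hnil hlen, hl,
    List.getD_append_right _ _ _ _ (Nat.le_add_right _ _), Nat.add_sub_cancel_left]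

lemma flatten_pre (f : List AB → List (List AB)) (c : ℕ → List AB)
    (hfl : ∀ i, (f (c i)).flatten = c i) : ∀ n, (pre (fun j => f (c j)) n).flatten = pre c n
  | 0 => by simp [pre]
  | n + 1 => by
    rw [pre_succ, pre_succ, List.flatten_append, flatten_pre f c hfl n, hfl]

lemma pre_eq_flatten (c : ℕ → List X) (n : ℕ) :
    pre c n = ((List.range n).map c).flatten := by
  induction n with
  | zero => rfl
  | succ n ih => rw [pre_succ, List.range_succ, List.map_append, List.flatten_append, ih]; simp

lemma lim_flatten (f : List AB → List (List AB)) (c : ℕ → List AB)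
    (hnil : ∀ i, f (c i) ≠ []) (hfl : ∀ i, (f (c i)).flatten = c i)
    (hval : ∀ i, ∀ w ∈ f (c i), w ≠ []) (hcnil : ∀ i, c i ≠ []) :
    infConcat (lim [] (fun j => f (c j))) = infConcat c := by
  funext i
  set F : ℕ → List (List AB) := fun j => f (c j) with hF
  set E : ℕ → List AB := lim [] F with hE
  have hEnil : ∀ j, E j ≠ [] := by
    intro j
    obtain ⟨m, hm⟩ := lim_mem ([] : List AB) hnil j
    exact hval m _ hm
  set P : List (List AB) := pre F (i + 1) with hP
  have hmap : (List.range P.length).map E = P := by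
    apply List.ext_getElem (by simp)
    intro j h1 h2
    have hj : j < P.length := by simpa using h2
    simp only [List.getElem_map, List.getElem_range]
    rw [hE, lim_eq ([] : List AB) hnil hj, List.getD_eq_getElem _ _ hj]
  have hpre : pre E P.length = pre c (i + 1) := by
    rw [pre_eq_flatten, hmap, hP, flatten_pre f c hfl]
  have hi1 : i < (pre c (i + 1)).length :=
    lt_of_lt_of_le (Nat.lt_succ_self i) (le_length_pre c hcnil (i + 1))
  have hi2 : i < (pre E P.length).length := by rw [hpre]; exact hi1
  show lim AB.a E i = lim AB.a c i
  rw [lim_eq AB.a hEnil hi2, hpre, lim_eq AB.a hcnil hi1]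

/-! ### Lifting uniqueness along a substitution -/

def FinU (α β : List AB) : Prop :=
  ∀ γs ηs : List (List AB),
    (∀ w ∈ γs, w = α ∨ w = β) → (∀ w ∈ ηs, w = α ∨ w = β) →
    γs.flatten = ηs.flatten → γs = ηs

def InfU (α β : List AB) : Prop :=
  ∀ c d : ℕ → List AB,
    (∀ i, c i = α ∨ c i = β) → (∀ i, d i = α ∨ d i = β) →
    infConcat c = infConcat d → c = d

lemma lift_fin (α β α' β' : List AB) (f : List AB → List (List AB))
    (hfa : ∀ w ∈ f α', w = α ∨ w = β) (hfb : ∀ w ∈ f β', w = α ∨ w = β)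
    (hfla : (f α').flatten = α') (hflb : (f β').flatten = β')
    (IH : FinU α β)
    (hinj : ∀ γs ηs : List (List AB),
      (∀ w ∈ γs, w = α' ∨ w = β') → (∀ w ∈ ηs, w = α' ∨ w = β') →
      γs.flatMap f = ηs.flatMap f → γs = ηs) :
    FinU α' β' := by
  intro γs ηs hγ hη hfl
  have hval : ∀ (ls : List (List AB)), (∀ w ∈ ls, w = α' ∨ w = β') →
      ∀ w ∈ ls.flatMap f, w = α ∨ w = β := by
    intro ls hls w hw
    rw [List.mem_flatMap] at hw
    obtain ⟨x, hx, hw⟩ := hw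
    rcases hls x hx with rfl | rfl
    · exact hfa w hw
    · exact hfb w hw
  have key : ∀ (ls : List (List AB)), (∀ w ∈ ls, w = α' ∨ w = β') →
      (ls.flatMap f).flatten = ls.flatten := by
    intro ls
    induction ls with
    | nil => intro _; rfl
    | cons x t ih =>
      intro h
      rw [List.flatMap_cons, List.flatten_append, ih (fun w hw => h w (List.mem_cons_of_mem _ hw)),
        List.flatten_cons]
      rcases h x (List.mem_cons_self) with rfl | rfl
      · rw [hfla]
      · rw [hflb]
  apply hinj γs ηs hγ hη
  apply IH _ _ (hval γs hγ) (hval ηs hη)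
  rw [key γs hγ, key ηs hη, hfl]

lemma lift_inf (α β α' β' : List AB) (f : List AB → List (List AB))
    (hα : α ≠ []) (hβ : β ≠ [])
    (hα' : α' ≠ []) (hβ' : β' ≠ [])
    (hfa : ∀ w ∈ f α', w = α ∨ w = β) (hfb : ∀ w ∈ f β', w = α ∨ w = β)
    (hfa0 : f α' ≠ []) (hfb0 : f β' ≠ [])
    (hfla : (f α').flatten = α') (hflb : (f β').flatten = β')
    (IH : InfU α β)
    (hdec : ∀ c d : ℕ → List AB,
      (∀ i, c i = α' ∨ c i = β') → (∀ i, d i = α' ∨ d i = β') →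
      lim [] (fun j => f (c j)) = lim [] (fun j => f (d j)) → c = d) :
    InfU α' β' := by
  intro c d hc hd heq
  have hnilc : ∀ i, f (c i) ≠ [] := fun i => by rcases hc i with h | h <;> rw [h] <;> assumption
  have hnild : ∀ i, f (d i) ≠ [] := fun i => by rcases hd i with h | h <;> rw [h] <;> assumption
  have hflc : ∀ i, (f (c i)).flatten = c i := fun i => by
    rcases hc i with h | h <;> rw [h] <;> assumption
  have hfld : ∀ i, (f (d i)).flatten = d i := fun i => by
    rcases hd i with h | h <;> rw [h] <;> assumption
  have hvalc : ∀ i, ∀ w ∈ f (c i), w ≠ [] := by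
    intro i w hw
    rcases hc i with h | h <;> rw [h] at hw
    · rcases hfa w hw with rfl | rfl <;> assumption
    · rcases hfb w hw with rfl | rfl <;> assumption
  have hvald : ∀ i, ∀ w ∈ f (d i), w ≠ [] := by
    intro i w hw
    rcases hd i with h | h <;> rw [h] at hw
    · rcases hfa w hw with rfl | rfl <;> assumption
    · rcases hfb w hw with rfl | rfl <;> assumption
  have hcnil : ∀ i, c i ≠ [] := fun i => by rcases hc i with h | h <;> rw [h] <;> assumption
  have hdnil : ∀ i, d i ≠ [] := fun i => by rcases hd i with h | h <;> rw [h] <;> assumption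
  apply hdec c d hc hd
  apply IH
  · intro i
    obtain ⟨m, hm⟩ := lim_mem ([] : List AB) hnilc i
    rcases hc m with h | h <;> rw [h] at hm
    · exact hfa _ hm
    · exact hfb _ hm
  · intro i
    obtain ⟨m, hm⟩ := lim_mem ([] : List AB) hnild i
    rcases hd m with h | h <;> rw [h] at hm
    · exact hfa _ hm
    · exact hfb _ hm
  · rw [lim_flatten f c hnilc hflc hvalc hcnil, lim_flatten f d hnild hfld hvald hdnil, heq]


/-! ### Base case -/

lemma base_fin : FinU [AB.a] [AB.b] := by
  have sing : ∀ γs : List (List AB), (∀ w ∈ γs, w = [AB.a] ∨ w = [AB.b]) →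
      γs = γs.flatten.map (fun x => [x]) := by
    intro γs
    induction γs with
    | nil => intro _; rfl
    | cons x t ih =>
      intro h
      have ht := ih (fun w hw => h w (List.mem_cons_of_mem _ hw))
      rcases h x (List.mem_cons_self) with rfl | rfl <;>
        simp only [List.flatten_cons, List.map_append, List.map_cons, List.map_nil] <;>
        rw [← ht] <;> rfl
  intro γs ηs hγ hη hfl
  rw [sing γs hγ, sing ηs hη, hfl]

lemma base_inf : InfU [AB.a] [AB.b] := by
  intro c d hc hd h
  have hlen : ∀ (c : ℕ → List AB), (∀ i, c i = [AB.a] ∨ c i = [AB.b]) →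
      ∀ n, (pre c n).length = n := by
    intro c hc n
    induction n with
    | zero => rfl
    | succ n ih =>
      rw [pre_succ, List.length_append, ih]
      rcases hc n with h' | h' <;> rw [h'] <;> rfl
  have key : ∀ (c : ℕ → List AB) (hc : ∀ i, c i = [AB.a] ∨ c i = [AB.b]) (n : ℕ),
      infConcat c n = (c n).getD 0 AB.a := by
    intro c hc n
    show (pre c (n + 1)).getD n AB.a = (c n).getD 0 AB.a
    rw [pre_succ, List.getD_append_right _ _ _ _ (le_of_eq (hlen c hc n)), hlen c hc n,
      Nat.sub_self]
  funext n
  have h1 : (c n).getD 0 AB.a = (d n).getD 0 AB.a := by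
    rw [← key c hc n, ← key d hd n, h]
  rcases hc n with h3 | h3 <;> rcases hd n with h4 | h4 <;> rw [h3, h4] at h1 ⊢ <;>
    simp at h1 ⊢

/-! ### The U case: (α, β) ↦ (αβ, β) -/

section Ucase
variable (α β : List AB) (hα : α ≠ []) (hβ : β ≠ []) (hab : α ≠ β)

def fU (α β : List AB) : List AB → List (List AB) := fun x => if x = β then [β] else [α, β]

lemma fU_ab (hne : α ++ β ≠ β) : fU α β (α ++ β) = [α, β] := if_neg hne

lemma fU_b : fU α β β = [β] := if_pos rfl

lemma fU_ne_nil (x : List AB) : fU α β x ≠ [] := by unfold fU; split <;> simp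

include hab in
lemma hinjU (hne : α ++ β ≠ β) : ∀ γs ηs : List (List AB),
    (∀ w ∈ γs, w = α ++ β ∨ w = β) → (∀ w ∈ ηs, w = α ++ β ∨ w = β) →
    γs.flatMap (fU α β) = ηs.flatMap (fU α β) → γs = ηs := by
  intro γs
  induction γs with
  | nil =>
    intro ηs _ _ h
    cases ηs with
    | nil => rfl
    | cons y s =>
      exfalso
      rw [List.flatMap_nil, List.flatMap_cons] at h
      exact fU_ne_nil α β y (List.append_eq_nil_iff.mp h.symm).1
  | cons x t ih =>
    intro ηs hγ hη h
    cases ηs with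
    | nil =>
      exfalso
      rw [List.flatMap_nil, List.flatMap_cons] at h
      exact fU_ne_nil α β x (List.append_eq_nil_iff.mp h).1
    | cons y s =>
      rw [List.flatMap_cons, List.flatMap_cons] at h
      have ht : ∀ w ∈ t, w = α ++ β ∨ w = β := fun w hw => hγ w (List.mem_cons_of_mem _ hw)
      have hs : ∀ w ∈ s, w = α ++ β ∨ w = β := fun w hw => hη w (List.mem_cons_of_mem _ hw)
      rcases hγ x (List.mem_cons_self) with h3 | h3 <;>
        rcases hη y (List.mem_cons_self) with h4 | h4
      · rw [h3, h4, fU_ab α β hne] at h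
        have h5 : t.flatMap (fU α β) = s.flatMap (fU α β) := by simpa using h
        rw [h3, h4, ih s ht hs h5]
      · rw [h3, h4, fU_ab α β hne, fU_b] at h
        simp only [List.cons_append, List.nil_append] at h
        injection h with h1 _
        exact absurd h1 hab
      · rw [h3, h4, fU_ab α β hne, fU_b] at h
        simp only [List.cons_append, List.nil_append] at h
        injection h with h1 _
        exact absurd h1.symm hab
      · rw [h3, h4, fU_b] at h
        have h5 : t.flatMap (fU α β) = s.flatMap (fU α β) := by simpa using h
        rw [h3, h4, ih s ht hs h5]

include hab in
lemma hdecU (hne : α ++ β ≠ β) : ∀ c d : ℕ → List AB,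
    (∀ i, c i = α ++ β ∨ c i = β) → (∀ i, d i = α ++ β ∨ d i = β) →
    lim [] (fun j => fU α β (c j)) = lim [] (fun j => fU α β (d j)) → c = d := by
  intro c d hc hd hE
  have hnilc : ∀ i, fU α β (c i) ≠ [] := fun i => fU_ne_nil α β (c i)
  have hnild : ∀ i, fU α β (d i) ≠ [] := fun i => fU_ne_nil α β (d i)
  have key : ∀ n, (∀ j, j < n → c j = d j) → c n = d n := by
    intro n hj
    have hFn : pre (fun j => fU α β (c j)) n = pre (fun j => fU α β (d j)) n :=
      pre_congr (fun j hj' => by rw [hj j hj'])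
    have h0c : 0 < (fU α β (c n)).length := List.length_pos_iff.mpr (hnilc n)
    have h0d : 0 < (fU α β (d n)).length := List.length_pos_iff.mpr (hnild n)
    have h1 := ex_block (fU α β) c hnilc (n := n) (k := 0) h0c
    have h2 := ex_block (fU α β) d hnild (n := n) (k := 0) h0d
    rw [hE, hFn] at h1
    rw [h1] at h2
    rcases hc n with h3 | h3 <;> rcases hd n with h4 | h4 <;> rw [h3, h4] at h2 ⊢
    · rw [fU_ab α β hne, fU_b] at h2
      simp only [List.getD_cons_zero] at h2
      exact absurd h2 hab
    · rw [fU_ab α β hne, fU_b] at h2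
      simp only [List.getD_cons_zero] at h2
      exact absurd h2.symm hab
  funext n
  induction n using Nat.strong_induction_on with
  | _ n ih => exact key n ih

end Ucase


/-! ### The V case: (α, β) ↦ (α, αβ) -/

section Vcase
variable (α β : List AB) (hab : α ≠ β)

def fV (α β : List AB) : List AB → List (List AB) := fun x => if x = α then [α] else [α, β]

lemma fV_a : fV α β α = [α] := if_pos rfl

lemma fV_ab (hne : α ++ β ≠ α) : fV α β (α ++ β) = [α, β] := if_neg hne

lemma fV_ne_nil (x : List AB) : fV α β x ≠ [] := by unfold fV; split <;> simp

lemma fV_head (x : List AB) : ∃ r, fV α β x = α :: r := by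
  unfold fV; split
  · exact ⟨[], rfl⟩
  · exact ⟨[β], rfl⟩

include hab in
lemma hinjV (hne : α ++ β ≠ α) : ∀ γs ηs : List (List AB),
    (∀ w ∈ γs, w = α ∨ w = α ++ β) → (∀ w ∈ ηs, w = α ∨ w = α ++ β) →
    γs.flatMap (fV α β) = ηs.flatMap (fV α β) → γs = ηs := by
  intro γs
  induction γs with
  | nil =>
    intro ηs _ _ h
    cases ηs with
    | nil => rfl
    | cons y s =>
      exfalso
      rw [List.flatMap_nil, List.flatMap_cons] at h
      exact fV_ne_nil α β y (List.append_eq_nil_iff.mp h.symm).1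
  | cons x t ih =>
    intro ηs hγ hη h
    cases ηs with
    | nil =>
      exfalso
      rw [List.flatMap_nil, List.flatMap_cons] at h
      exact fV_ne_nil α β x (List.append_eq_nil_iff.mp h).1
    | cons y s =>
      rw [List.flatMap_cons, List.flatMap_cons] at h
      have ht : ∀ w ∈ t, w = α ∨ w = α ++ β := fun w hw => hγ w (List.mem_cons_of_mem _ hw)
      have hs : ∀ w ∈ s, w = α ∨ w = α ++ β := fun w hw => hη w (List.mem_cons_of_mem _ hw)
      rcases hγ x (List.mem_cons_self) with h3 | h3 <;>
        rcases hη y (List.mem_cons_self) with h4 | h4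
      · rw [h3, h4, fV_a] at h
        have h5 : t.flatMap (fV α β) = s.flatMap (fV α β) := by simpa using h
        rw [h3, h4, ih s ht hs h5]
      · exfalso
        rw [h3, h4, fV_a, fV_ab α β hne] at h
        simp only [List.cons_append, List.nil_append] at h
        injection h with _ h'
        cases t with
        | nil => simp at h'
        | cons z t' =>
          obtain ⟨r, hr⟩ := fV_head α β z
          rw [List.flatMap_cons, hr, List.cons_append] at h'
          injection h' with h1 _
          exact hab h1
      · exfalso
        rw [h3, h4, fV_a, fV_ab α β hne] at h
        simp only [List.cons_append, List.nil_append] at h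
        injection h with _ h'
        cases s with
        | nil => simp at h'
        | cons z s' =>
          obtain ⟨r, hr⟩ := fV_head α β z
          rw [List.flatMap_cons, hr, List.cons_append] at h'
          injection h' with h1 _
          exact hab h1.symm
      · rw [h3, h4, fV_ab α β hne] at h
        have h5 : t.flatMap (fV α β) = s.flatMap (fV α β) := by simpa using h
        rw [h3, h4, ih s ht hs h5]

include hab in
lemma mainV (hne : α ++ β ≠ α) : ∀ c d : ℕ → List AB,
    (∀ i, c i = α ∨ c i = α ++ β) → (∀ i, d i = α ∨ d i = α ++ β) →
    lim [] (fun j => fV α β (c j)) = lim [] (fun j => fV α β (d j)) →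
    ∀ n, (∀ j, j < n → c j = d j) → c n = α → d n = α ++ β → False := by
  intro c d hc hd hE n hj h3 h4
  have hnilc : ∀ i, fV α β (c i) ≠ [] := fun i => fV_ne_nil α β (c i)
  have hnild : ∀ i, fV α β (d i) ≠ [] := fun i => fV_ne_nil α β (d i)
  have hFn : pre (fun j => fV α β (c j)) n = pre (fun j => fV α β (d j)) n :=
    pre_congr (fun j hj' => by rw [hj j hj'])
  have hlen2 : (1 : ℕ) < (fV α β (d n)).length := by rw [h4, fV_ab α β hne]; simp
  have h2 := ex_block (fV α β) d hnild (n := n) (k := 1) hlen2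
  rw [h4, fV_ab α β hne] at h2
  have h1 := ex_block (fV α β) c hnilc (n := n + 1) (k := 0)
    (List.length_pos_iff.mpr (hnilc (n + 1)))
  have hL1 : (pre (fun j => fV α β (c j)) (n + 1)).length =
      (pre (fun j => fV α β (c j)) n).length + 1 := by
    rw [pre_succ, List.length_append, h3, fV_a]
    rfl
  rw [Nat.add_zero, hL1] at h1
  obtain ⟨r, hr⟩ := fV_head α β (c (n + 1))
  rw [hr] at h1
  rw [hE, hFn] at h1
  rw [h1] at h2
  simp only [List.getD_cons_zero, List.getD_cons_succ] at h2
  exact hab h2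

include hab in
lemma hdecV (hne : α ++ β ≠ α) : ∀ c d : ℕ → List AB,
    (∀ i, c i = α ∨ c i = α ++ β) → (∀ i, d i = α ∨ d i = α ++ β) →
    lim [] (fun j => fV α β (c j)) = lim [] (fun j => fV α β (d j)) → c = d := by
  intro c d hc hd hE
  have key : ∀ n, (∀ j, j < n → c j = d j) → c n = d n := by
    intro n hj
    rcases hc n with h3 | h3 <;> rcases hd n with h4 | h4 <;> rw [h3, h4]
    · exact (mainV α β hab hne c d hc hd hE n hj h3 h4).elim
    · exact (mainV α β hab hne d c hd hc hE.symm n (fun j hj' => (hj j hj').symm) h4 h3).elim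
  funext n
  induction n using Nat.strong_induction_on with
  | _ n ih => exact key n ih

end Vcase

/-! ### Facts about P̄ -/

lemma pbar_facts {n : ℕ} {α β : List AB} (h : PbarN n α β) :
    α ≠ [] ∧ β ≠ [] ∧ α ≠ β := by
  induction h with
  | base => exact ⟨by simp, by simp, by decide⟩
  | u h' ih =>
    obtain ⟨h1, h2, h3⟩ := ih
    refine ⟨fun hh => h1 (List.append_eq_nil_iff.mp hh).1, h2, fun hh => h1 ?_⟩
    have := congrArg List.length hh
    rw [List.length_append] at this
    exact List.length_eq_zero_iff.mp (by omega)
  | v h' ih =>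
    obtain ⟨h1, h2, h3⟩ := ih
    refine ⟨h1, fun hh => h1 (List.append_eq_nil_iff.mp hh).1, fun hh => h2 ?_⟩
    have := congrArg List.length hh.symm
    rw [List.length_append] at this
    exact List.length_eq_zero_iff.mp (by omega)

end StatementNine

theorem statement_9 (α β : List AB) (h : ∃ n : ℕ, PbarN n α β) :
    (∀ γs ηs : List (List AB),
      (∀ w ∈ γs, w = α ∨ w = β) → (∀ w ∈ ηs, w = α ∨ w = β) →
      γs.flatten = ηs.flatten → γs = ηs) ∧
    (∀ c d : ℕ → List AB,
      (∀ i, c i = α ∨ c i = β) → (∀ i, d i = α ∨ d i = β) →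
      infConcat c = infConcat d → c = d) := by
  obtain ⟨n, h⟩ := h
  induction h with
  | base => exact ⟨StatementNine.base_fin, StatementNine.base_inf⟩
  | u h' ih =>
    rename_i n α β
    obtain ⟨hα, hβ, hab⟩ := StatementNine.pbar_facts h'
    have hne : α ++ β ≠ β := by
      intro hh
      have := congrArg List.length hh
      rw [List.length_append] at this
      exact hα (List.length_eq_zero_iff.mp (by omega))
    have hfa : ∀ w ∈ StatementNine.fU α β (α ++ β), w = α ∨ w = β := by
      rw [StatementNine.fU_ab α β hne]; intro w hw; simpa using hw
    have hfb : ∀ w ∈ StatementNine.fU α β β, w = α ∨ w = β := by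
      rw [StatementNine.fU_b]; intro w hw; right; simpa using hw
    have hfla : (StatementNine.fU α β (α ++ β)).flatten = α ++ β := by
      rw [StatementNine.fU_ab α β hne]; simp
    have hflb : (StatementNine.fU α β β).flatten = β := by
      rw [StatementNine.fU_b]; simp
    constructor
    · exact StatementNine.lift_fin α β (α ++ β) β (StatementNine.fU α β)
        hfa hfb hfla hflb ih.1 (StatementNine.hinjU α β hab hne)
    · exact StatementNine.lift_inf α β (α ++ β) β (StatementNine.fU α β)
        hα hβ (fun hh => hα (List.append_eq_nil_iff.mp hh).1) hβ
        hfa hfb (StatementNine.fU_ne_nil α β _) (StatementNine.fU_ne_nil α β _)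
        hfla hflb ih.2 (StatementNine.hdecU α β hab hne)
  | v h' ih =>
    rename_i n α β
    obtain ⟨hα, hβ, hab⟩ := StatementNine.pbar_facts h'
    have hne : α ++ β ≠ α := by
      intro hh
      have := congrArg List.length hh
      rw [List.length_append] at this
      exact hβ (List.length_eq_zero_iff.mp (by omega))
    have hfa : ∀ w ∈ StatementNine.fV α β α, w = α ∨ w = β := by
      rw [StatementNine.fV_a]; intro w hw; left; simpa using hw
    have hfb : ∀ w ∈ StatementNine.fV α β (α ++ β), w = α ∨ w = β := by
      rw [StatementNine.fV_ab α β hne]; intro w hw; simpa using hw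
    have hfla : (StatementNine.fV α β α).flatten = α := by
      rw [StatementNine.fV_a]; simp
    have hflb : (StatementNine.fV α β (α ++ β)).flatten = α ++ β := by
      rw [StatementNine.fV_ab α β hne]; simp
    constructor
    · exact StatementNine.lift_fin α β α (α ++ β) (StatementNine.fV α β)
        hfa hfb hfla hflb ih.1 (StatementNine.hinjV α β hab hne)
    · exact StatementNine.lift_inf α β α (α ++ β) (StatementNine.fV α β)
        hα hβ hα (fun hh => hα (List.append_eq_nil_iff.mp hh).1)
        hfa hfb (StatementNine.fV_ne_nil α β _) (StatementNine.fV_ne_nil α β _)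
        hfla hflb ih.2 (StatementNine.hdecV α β hab hne)
end

section
/- For every pair (α, β) ∈ P̄: (i) αβ = aθb for some palindrome θ over {a, b}; (ii) ααββ = a θ̂ a b θ̂ b for some palindrome θ̂ over {a, b}. -/
lemma repflip (k : ℕ) (x : AB) :
    x :: List.replicate k x = List.replicate k x ++ [x] := by
  rw [← List.replicate_succ, List.replicate_succ']

lemma repshift (k : ℕ) (x : AB) (t : List AB) :
    x :: (List.replicate k x ++ t) = List.replicate k x ++ x :: t := by
  rw [← List.cons_append, repflip, List.append_assoc]
  rfl

lemma key_s10 (r s : List AB) (hr : r.reverse = r) (hs : s.reverse = s)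
    (hθ : (r ++ AB.b :: AB.a :: s).reverse = r ++ AB.b :: AB.a :: s) :
    s ++ AB.a :: AB.b :: r = r ++ AB.b :: AB.a :: s := by
  have := hθ
  simp [List.reverse_append, hr, hs] at this
  simpa using this

lemma palU (r s : List AB) (hr : r.reverse = r) (hs : s.reverse = s)
    (hθ : (r ++ AB.b :: AB.a :: s).reverse = r ++ AB.b :: AB.a :: s) :
    ((r ++ AB.b :: AB.a :: s) ++ AB.b :: AB.a :: s).reverse
      = (r ++ AB.b :: AB.a :: s) ++ AB.b :: AB.a :: s := by
  have k1 := key_s10 r s hr hs hθ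
  simp [List.reverse_append, hr, hs]
  rw [k1]
  have e2 : s ++ AB.a :: AB.b :: (r ++ AB.b :: AB.a :: s)
      = (s ++ AB.a :: AB.b :: r) ++ AB.b :: AB.a :: s := by simp
  rw [e2, k1]
  simp

lemma palV (r s : List AB) (hr : r.reverse = r) (hs : s.reverse = s)
    (hθ : (r ++ AB.b :: AB.a :: s).reverse = r ++ AB.b :: AB.a :: s) :
    (r ++ AB.b :: AB.a :: (r ++ AB.b :: AB.a :: s)).reverse
      = r ++ AB.b :: AB.a :: (r ++ AB.b :: AB.a :: s) := by
  have k1 := key_s10 r s hr hs hθ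
  simp [List.reverse_append, hr, hs]
  have e : s ++ AB.a :: AB.b :: (r ++ AB.a :: AB.b :: r)
      = (s ++ AB.a :: AB.b :: r) ++ AB.a :: AB.b :: r := by simp
  rw [e, k1]
  have e2 : (r ++ AB.b :: AB.a :: s) ++ AB.a :: AB.b :: r
      = r ++ AB.b :: AB.a :: (s ++ AB.a :: AB.b :: r) := by simp
  rw [e2, k1]

def PairInv (α β : List AB) : Prop :=
  (∃ k, α = [AB.a] ∧ β = List.replicate k AB.a ++ [AB.b]) ∨
  (∃ k, α = AB.a :: List.replicate k AB.b ∧ β = [AB.b]) ∨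
  (∃ r s : List AB, r.reverse = r ∧ s.reverse = s ∧
    (r ++ AB.b :: AB.a :: s).reverse = r ++ AB.b :: AB.a :: s ∧
    α = AB.a :: r ++ [AB.b] ∧ β = AB.a :: s ++ [AB.b])

lemma inv_base : PairInv [AB.a] [AB.b] := Or.inl ⟨0, rfl, rfl⟩

lemma inv_u (α β : List AB) (h : PairInv α β) : PairInv (α ++ β) β := by
  rcases h with ⟨k, ha, hb⟩ | ⟨k, ha, hb⟩ | ⟨r, s, hr, hs, hθ, ha, hb⟩
  · subst ha; subst hb
    cases k with
    | zero => exact Or.inr (Or.inl ⟨1, rfl, rfl⟩)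
    | succ j =>
      refine Or.inr (Or.inr ⟨List.replicate (j+1) AB.a, List.replicate j AB.a,
        List.reverse_replicate, List.reverse_replicate, ?_, ?_, ?_⟩)
      · simp [List.reverse_append, List.reverse_replicate]
        simp [List.replicate_succ, repshift]
      · simp [List.replicate_succ]
      · simp [List.replicate_succ]
  · subst ha; subst hb
    exact Or.inr (Or.inl ⟨k + 1, by simp [List.replicate_succ'], rfl⟩)
  · subst ha; subst hb
    refine Or.inr (Or.inr ⟨r ++ AB.b :: AB.a :: s, s, hθ, hs,
      palU r s hr hs hθ, by simp, rfl⟩)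

lemma inv_v (α β : List AB) (h : PairInv α β) : PairInv α (α ++ β) := by
  rcases h with ⟨k, ha, hb⟩ | ⟨k, ha, hb⟩ | ⟨r, s, hr, hs, hθ, ha, hb⟩
  · subst ha; subst hb
    exact Or.inl ⟨k + 1, rfl, by simp [List.replicate_succ]⟩
  · subst ha; subst hb
    cases k with
    | zero => exact Or.inl ⟨1, rfl, rfl⟩
    | succ j =>
      refine Or.inr (Or.inr ⟨List.replicate j AB.b, List.replicate (j+1) AB.b,
        List.reverse_replicate, List.reverse_replicate, ?_, ?_, ?_⟩)
      · simp [List.reverse_append, List.reverse_replicate]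
        simp [List.replicate_succ, repshift]
      · simp [List.replicate_succ']
      · simp [List.replicate_succ']
  · subst ha; subst hb
    refine Or.inr (Or.inr ⟨r, r ++ AB.b :: AB.a :: s, hr, hθ,
      palV r s hr hs hθ, rfl, by simp⟩)

theorem statement_10 (α β : List AB) (h : ∃ n : ℕ, PbarN n α β) :
    (∃ θ : List AB, θ.reverse = θ ∧ α ++ β = AB.a :: (θ ++ [AB.b])) ∧
    (∃ θ : List AB, θ.reverse = θ ∧
      α ++ α ++ β ++ β = AB.a :: (θ ++ AB.a :: AB.b :: (θ ++ [AB.b]))) := by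
  obtain ⟨n, hn⟩ := h
  have hinv : PairInv α β := by
    induction hn with
    | base => exact inv_base
    | u h ih => exact inv_u _ _ ih
    | v h ih => exact inv_v _ _ ih
  rcases hinv with ⟨k, ha, hb⟩ | ⟨k, ha, hb⟩ | ⟨r, s, hr, hs, hθ, ha, hb⟩
  · subst ha; subst hb
    refine ⟨⟨List.replicate k AB.a, List.reverse_replicate, by simp⟩,
      ⟨List.replicate k AB.a, List.reverse_replicate, ?_⟩⟩
    simp
    simp [repshift]
  · subst ha; subst hb
    refine ⟨⟨List.replicate k AB.b, List.reverse_replicate, by simp⟩,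
      ⟨List.replicate k AB.b, List.reverse_replicate, ?_⟩⟩
    simp
    simp [repshift]
  · subst ha; subst hb
    have k1 := key_s10 r s hr hs hθ
    refine ⟨⟨r ++ AB.b :: AB.a :: s, hθ, by simp⟩,
      ⟨r ++ AB.b :: AB.a :: s, hθ, ?_⟩⟩
    simp
    have e : s ++ AB.a :: AB.b :: (r ++ AB.b :: AB.a :: (s ++ [AB.b]))
        = (s ++ AB.a :: AB.b :: r) ++ AB.b :: AB.a :: (s ++ [AB.b]) := by simp
    rw [e, k1]
    simp
end
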